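/- arXiv:1805.11405 — 4 statements merged into one kernel-verified Lean document; each statement's English description precedes it below -/
import Mathlib

section
/- For every β > π, d ≥ 7, and 0 < τ < 1/2, there exists a polynomial q of degree at most d such that sup_{x ∈ [−1,1]} |q(x) − (1/β)log(1 + e^{βx})| ≤ (12β/π)·e^{−πd/(4β)}. -/
open Complex Polynomial MeasureTheory

namespace SPaux

lemma sinh_le_three_half {s : ℝ} (h0 : 0 ≤ s) (h1 : s ≤ 1/2) :
    Real.sinh s ≤ (3/2) * s := by
  have h2 : (-s) + 1 ≤ Real.exp (-s) := Real.add_one_le_exp _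
  have h3 : (1 - s) * Real.exp s ≤ 1 := by
    calc (1-s) * Real.exp s ≤ Real.exp (-s) * Real.exp s := by
          nlinarith [Real.exp_pos s]
      _ = 1 := by rw [← Real.exp_add]; simp
  rw [Real.sinh_eq]
  nlinarith [Real.exp_pos s, h2, h3]

lemma cosh_le_seven_sixth {s : ℝ} (h0 : 0 ≤ s) (h1 : s ≤ 1/4) :
    Real.cosh s ≤ 7/6 := by
  have h2 : (-s) + 1 ≤ Real.exp (-s) := Real.add_one_le_exp _
  have h3 : (1 - s) * Real.exp s ≤ 1 := by
    calc (1-s) * Real.exp s ≤ Real.exp (-s) * Real.exp s := by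
          nlinarith [Real.exp_pos s]
      _ = 1 := by rw [← Real.exp_add]; simp
  have h4 : Real.exp (-s) ≤ 1 := by
    rw [Real.exp_le_one_iff]; linarith
  rw [Real.cosh_eq]
  nlinarith [Real.exp_pos s]

lemma cosh_le_exp_abs (t : ℝ) : Real.cosh t ≤ Real.exp |t| := by
  rw [Real.cosh_eq]
  have h1 : Real.exp t ≤ Real.exp |t| := Real.exp_le_exp.mpr (le_abs_self t)
  have h2 : Real.exp (-t) ≤ Real.exp |t| := Real.exp_le_exp.mpr (neg_le_abs t)
  linarith

lemma ccos_re (z : ℂ) : (Complex.cos z).re = Real.cos z.re * Real.cosh z.im := by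
  have h := Complex.cos_add_mul_I (z.re : ℂ) (z.im : ℂ)
  rw [Complex.re_add_im] at h
  rw [h]
  simp [Complex.cos_ofReal_re, Complex.cosh_ofReal_re, Complex.sin_ofReal_re,
    Complex.sinh_ofReal_re, Complex.cos_ofReal_im, Complex.cosh_ofReal_im,
    Complex.sin_ofReal_im, Complex.sinh_ofReal_im]

lemma ccos_im (z : ℂ) : (Complex.cos z).im = -(Real.sin z.re * Real.sinh z.im) := by
  have h := Complex.cos_add_mul_I (z.re : ℂ) (z.im : ℂ)
  rw [Complex.re_add_im] at h
  rw [h]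
  simp [Complex.cos_ofReal_re, Complex.cosh_ofReal_re, Complex.sin_ofReal_re,
    Complex.sinh_ofReal_re, Complex.cos_ofReal_im, Complex.cosh_ofReal_im,
    Complex.sin_ofReal_im, Complex.sinh_ofReal_im]

lemma ccosh_re (z : ℂ) : (Complex.cosh z).re = Real.cosh z.re * Real.cos z.im := by
  have h : z = (z.re : ℂ) + (z.im : ℂ) * I := (Complex.re_add_im z).symm
  rw [h, Complex.cosh_add, Complex.cosh_mul_I, Complex.sinh_mul_I,
    ]
  simp [Complex.cos_ofReal_re, Complex.cosh_ofReal_re, Complex.sin_ofReal_re,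
    Complex.sinh_ofReal_re, Complex.cos_ofReal_im, Complex.cosh_ofReal_im,
    Complex.sin_ofReal_im, Complex.sinh_ofReal_im]

lemma abs_cosh_le (z : ℂ) : ‖Complex.cosh z‖ ≤ Real.cosh z.re := by
  rw [Complex.cosh, Real.cosh_eq]
  calc ‖((Complex.exp z + Complex.exp (-z)) / 2)‖
      ≤ (‖Complex.exp z‖ + ‖Complex.exp (-z)‖) / 2 := by
        rw [norm_div, Complex.norm_two]
        gcongr
        exact norm_add_le _ _
    _ = (Real.exp z.re + Real.exp (-z.re)) / 2 := by
        rw [Complex.norm_exp, Complex.norm_exp, Complex.neg_re]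


noncomputable def Hc (b : ℝ) (z : ℂ) : ℂ :=
  Complex.log (2 * Complex.cosh ((b : ℂ) * z / 2)) / (b : ℂ)

section strip
variable {b : ℝ} (hb : Real.pi < b)
include hb

lemma w_im_eq (θ : ℂ) :
    ((b : ℂ) * Complex.cos θ / 2).im = b / 2 * (Complex.cos θ).im := by
  have h : (b : ℂ) * Complex.cos θ / 2 = ((b/2 : ℝ) : ℂ) * Complex.cos θ := by
    push_cast; ring
  rw [h, Complex.mul_im]; simp

lemma w_re_eq (θ : ℂ) :
    ((b : ℂ) * Complex.cos θ / 2).re = b / 2 * (Complex.cos θ).re := by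
  have h : (b : ℂ) * Complex.cos θ / 2 = ((b/2 : ℝ) : ℂ) * Complex.cos θ := by
    push_cast; ring
  rw [h, Complex.mul_re]; simp

lemma w_im_le {θ : ℂ} {c : ℝ} (hc : 0 ≤ c) (hc2 : c ≤ Real.pi / 2)
    (hθ : |θ.im| ≤ c / b) : |((b : ℂ) * Complex.cos θ / 2).im| ≤ (3/4) * c := by
  have hbpos : 0 < b := lt_trans Real.pi_pos hb
  rw [w_im_eq hb, abs_mul, ccos_im]
  have h1 : |(-(Real.sin θ.re * Real.sinh θ.im))| ≤ Real.sinh |θ.im| := by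
    rw [abs_neg, abs_mul, ← Real.abs_sinh]
    calc |Real.sin θ.re| * |Real.sinh θ.im| ≤ 1 * |Real.sinh θ.im| := by
          gcongr; exact Real.abs_sin_le_one θ.re
      _ = |Real.sinh θ.im| := one_mul _
  have hcb : c / b ≤ 1 / 2 := by
    rw [div_le_iff₀ hbpos]
    nlinarith [Real.pi_pos]
  have h2 : Real.sinh |θ.im| ≤ (3/2) * (c / b) :=
    le_trans (Real.sinh_le_sinh.mpr hθ) (sinh_le_three_half (by positivity) hcb)
  have h3 : |b / 2| = b / 2 := abs_of_pos (by positivity)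
  rw [h3]
  calc b / 2 * |(-(Real.sin θ.re * Real.sinh θ.im))| ≤ b / 2 * ((3/2) * (c/b)) := by
        have := le_trans h1 h2
        gcongr
    _ = (3/4) * c := by field_simp; ring
  
lemma strip_re_pos {θ : ℂ} (hθ : |θ.im| ≤ Real.pi / 2 / b) :
    0 < (2 * Complex.cosh ((b : ℂ) * Complex.cos θ / 2)).re := by
  have h1 : |((b : ℂ) * Complex.cos θ / 2).im| ≤ (3/4) * (Real.pi / 2) :=
    w_im_le hb (by positivity) (le_refl _) hθ
  have h2 : 0 < Real.cos (((b : ℂ) * Complex.cos θ / 2).im) := by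
    apply Real.cos_pos_of_mem_Ioo
    constructor
    · nlinarith [abs_le.mp h1, Real.pi_pos]
    · nlinarith [abs_le.mp h1, Real.pi_pos]
  have h3 : (2 * Complex.cosh ((b : ℂ) * Complex.cos θ / 2)).re
      = 2 * (Real.cosh (((b : ℂ) * Complex.cos θ / 2).re) *
          Real.cos (((b : ℂ) * Complex.cos θ / 2).im)) := by
    rw [Complex.mul_re, ccosh_re]; norm_num
  rw [h3]
  positivity

lemma strip_norm_le {θ : ℂ} (hθ : |θ.im| ≤ Real.pi / 4 / b) :
    ‖Hc b (Complex.cos θ)‖ ≤ 3/2 := by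
  have hbpos : 0 < b := lt_trans Real.pi_pos hb
  set w : ℂ := (b : ℂ) * Complex.cos θ / 2 with hw
  have hθ' : |θ.im| ≤ Real.pi / 2 / b := by
    refine le_trans hθ ((div_le_div_iff_of_pos_right hbpos).mpr (by linarith [Real.pi_pos]))

  -- im bound of w
  have h1 : |w.im| ≤ (3/4) * (Real.pi / 4) :=
    w_im_le hb (by positivity) (by linarith [Real.pi_pos]) hθ
  have hpi : Real.pi < 3.15 := by
    have := Real.pi_lt_d2
    linarith
  have hcos : (1:ℝ)/2 ≤ Real.cos w.im := by
    have h2 := Real.one_sub_sq_div_two_le_cos (x := w.im)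
    have h3 : w.im^2 ≤ ((3/4) * (3.15/4))^2 := by
      have := abs_le.mp h1
      nlinarith
    nlinarith
  -- re part of 2 cosh w at least 1
  have hre1 : (1:ℝ) ≤ (2 * Complex.cosh w).re := by
    have h3 : (2 * Complex.cosh w).re = 2 * (Real.cosh w.re * Real.cos w.im) := by
      rw [Complex.mul_re, ccosh_re]; norm_num
    rw [h3]
    nlinarith [Real.one_le_cosh w.re]
  have habs1 : (1:ℝ) ≤ ‖2 * Complex.cosh w‖ :=
    le_trans hre1 (Complex.re_le_norm _)
  -- |w.re| bound
  have hwre : |w.re| ≤ b/2 * (7/6) := by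
    rw [w_re_eq hb, abs_mul, ccos_re, abs_of_pos (show (0:ℝ) < b/2 by positivity), abs_mul]
    have h4 : |Real.cos θ.re| ≤ 1 := Real.abs_cos_le_one θ.re
    have h5 : |Real.cosh θ.im| ≤ 7/6 := by
      rw [abs_of_pos (Real.cosh_pos _), ← Real.cosh_abs]
      apply cosh_le_seven_sixth (abs_nonneg _)
      calc |θ.im| ≤ Real.pi / 4 / b := hθ
        _ ≤ 1/4 := by
            rw [div_le_iff₀ hbpos]
            nlinarith [Real.pi_pos]
    calc b/2 * (|Real.cos θ.re| * |Real.cosh θ.im|) ≤ b/2 * (1 * (7/6)) := by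
          gcongr
      _ = b/2 * (7/6) := by ring
  -- upper bound on abs
  have habs2 : ‖2 * Complex.cosh w‖ ≤ 2 * Real.exp |w.re| := by
    rw [norm_mul, Complex.norm_two]
    gcongr
    exact le_trans (abs_cosh_le w) (cosh_le_exp_abs w.re)
  -- log bound
  have hlog : ‖Complex.log (2 * Complex.cosh w)‖ ≤ Real.log 2 + |w.re| + Real.pi/2 := by
    have h6 := Complex.norm_le_abs_re_add_abs_im (Complex.log (2 * Complex.cosh w))
    have h7 : |(Complex.log (2 * Complex.cosh w)).re| ≤ Real.log 2 + |w.re| := by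
      rw [Complex.log_re, _root_.abs_of_nonneg (Real.log_nonneg habs1)]
      calc Real.log ‖2 * Complex.cosh w‖
          ≤ Real.log (2 * Real.exp |w.re|) := by
            apply Real.log_le_log (by linarith) habs2
        _ = Real.log 2 + |w.re| := by
            rw [Real.log_mul (by norm_num) (Real.exp_ne_zero _), Real.log_exp]
      
    have h8 : |(Complex.log (2 * Complex.cosh w)).im| ≤ Real.pi/2 := by
      rw [Complex.log_im]
      exact Complex.abs_arg_le_pi_div_two_iff.mpr (by linarith)
    calc ‖Complex.log (2 * Complex.cosh w)‖
        ≤ |(Complex.log (2 * Complex.cosh w)).re| + |(Complex.log (2 * Complex.cosh w)).im| := h6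
      _ ≤ Real.log 2 + |w.re| + Real.pi/2 := by linarith
  -- final
  have hnorm : ‖Hc b (Complex.cos θ)‖ = ‖Complex.log (2 * Complex.cosh w)‖ / b := by
    rw [Hc, norm_div]
    congr 1
    simp [abs_of_pos hbpos]
  rw [hnorm]
  rw [div_le_iff₀ hbpos]
  have hl2 : Real.log 2 < 0.6931471808 := Real.log_two_lt_d9
  have hpi2 : 3.141592 < Real.pi := Real.pi_gt_d6
  calc ‖Complex.log (2 * Complex.cosh w)‖ ≤ Real.log 2 + |w.re| + Real.pi/2 := hlog
    _ ≤ Real.log 2 + b/2 * (7/6) + Real.pi/2 := by linarith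
    _ ≤ 3/2 * b := by nlinarith

end strip

noncomputable def Gc (b : ℝ) (x : ℝ) : ℂ := Hc b (Complex.cos (x : ℂ))

noncomputable def gR (b : ℝ) (x : ℝ) : ℝ :=
  Real.log (2 * Real.cosh (b * Real.cos x / 2)) / b

lemma Gc_eq (b : ℝ) (x : ℝ) : Gc b x = ((gR b x : ℝ) : ℂ) := by
  have hpos : (0:ℝ) < 2 * Real.cosh (b * Real.cos x / 2) := by
    positivity
  rw [Gc, Hc, gR]
  rw [← Complex.ofReal_cos]
  have h1 : (b : ℂ) * (Real.cos x : ℂ) / 2 = ((b * Real.cos x / 2 : ℝ) : ℂ) := by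
    push_cast; ring
  rw [h1, ← Complex.ofReal_cosh]
  have h2 : (2 : ℂ) * ((Real.cosh (b * Real.cos x / 2) : ℝ) : ℂ)
      = ((2 * Real.cosh (b * Real.cos x / 2) : ℝ) : ℂ) := by push_cast; ring
  rw [h2, ← Complex.ofReal_log hpos.le]
  push_cast
  ring

section diff
variable {b : ℝ} (hb : Real.pi < b)
include hb

lemma diff_F (n : ℤ) {θ : ℂ} (hθ : |θ.im| ≤ Real.pi / 2 / b) :
    DifferentiableAt ℂ
      (fun z => Complex.exp (-(Complex.I * n * z)) * Hc b (Complex.cos z)) θ := by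
  apply DifferentiableAt.mul
  · apply DifferentiableAt.cexp
    apply DifferentiableAt.neg
    exact (differentiableAt_id.const_mul _)
  · apply DifferentiableAt.div_const
    apply DifferentiableAt.clog
    · apply DifferentiableAt.const_mul
      apply DifferentiableAt.ccosh
      apply DifferentiableAt.div_const
      exact (Complex.differentiable_cos.differentiableAt).const_mul _
    · rw [Complex.mem_slitPlane_iff]
      left
      exact strip_re_pos hb hθ

end diff

section contour
variable {b : ℝ} (hb : Real.pi < b)
include hb

lemma contour_bound (n : ℤ) :
    ‖∫ x in (0:ℝ)..(2*Real.pi), Complex.exp (-(Complex.I * n * x)) * Gc b x‖ ≤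
      3/2 * Real.exp (-(n.natAbs * (Real.pi/4/b))) * (2*Real.pi) := by
  have hbpos : 0 < b := lt_trans Real.pi_pos hb
  set η : ℝ := Real.pi/4/b with hηdef
  have hη : 0 < η := by positivity
  have hη2 : η ≤ Real.pi/2/b := by
    rw [hηdef]
    refine (div_le_div_iff_of_pos_right hbpos).mpr ?_
    linarith [Real.pi_pos]
  set F : ℂ → ℂ := fun z => Complex.exp (-(Complex.I * n * z)) * Hc b (Complex.cos z)
    with hF
  -- pointwise bound on horizontal lines
  have hbound : ∀ (t : ℝ) (x : ℝ), |t| ≤ η →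
      ‖F ((x:ℂ) + (t:ℂ) * Complex.I)‖ ≤ 3/2 * Real.exp ((n:ℝ) * t) := by
    intro t x ht
    have him : ((x:ℂ) + (t:ℂ) * Complex.I).im = t := by simp
    have hre : (-(Complex.I * n * ((x:ℂ) + (t:ℂ) * Complex.I))).re = (n:ℝ) * t := by
      simp [Complex.mul_re, Complex.mul_im]
    rw [hF]
    simp only [norm_mul]
    have h1 : ‖Complex.exp (-(Complex.I * n * ((x:ℂ) + (t:ℂ) * Complex.I)))‖
        = Real.exp ((n:ℝ) * t) := by
      rw [Complex.norm_exp, hre]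
    rw [h1]
    have h2 : ‖Hc b (Complex.cos ((x:ℂ) + (t:ℂ) * Complex.I))‖ ≤ 3/2 :=
      strip_norm_le hb (by rw [him]; exact le_trans ht (le_refl _))
    calc Real.exp ((n:ℝ)*t) * ‖Hc b (Complex.cos ((x:ℂ) + (t:ℂ) * Complex.I))‖
        ≤ Real.exp ((n:ℝ)*t) * (3/2) := by gcongr
      _ = 3/2 * Real.exp ((n:ℝ) * t) := by ring
  -- periodicity of F
  have hper : ∀ u : ℂ, F (u + 2*(Real.pi:ℂ)) = F u := by
    intro u
    rw [hF]
    simp only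
    rw [Complex.cos_add_two_pi]
    have h3 : -(Complex.I * n * (u + 2*(Real.pi:ℂ)))
        = -(Complex.I * n * u) + ((-n : ℤ):ℂ) * (2*(Real.pi:ℂ)*Complex.I) := by
      push_cast; ring
    rw [h3, Complex.exp_add, Complex.exp_int_mul_two_pi_mul_I, mul_one]
  have hgoal_eq : (∫ x in (0:ℝ)..(2*Real.pi), Complex.exp (-(Complex.I * n * x)) * Gc b x)
      = ∫ x in (0:ℝ)..(2*Real.pi), F ((x:ℂ)) := rfl
  rcases lt_trichotomy n 0 with hn | hn | hn
  · -- n < 0 : shift up to height η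
    have hdiff : DifferentiableOn ℂ F
        (Set.uIcc ((⟨0,0⟩:ℂ)).re ((⟨2*Real.pi, η⟩:ℂ)).re ×ℂ
          Set.uIcc ((⟨0,0⟩:ℂ)).im ((⟨2*Real.pi, η⟩:ℂ)).im) := by
      intro p hp
      rw [Complex.mem_reProdIm] at hp
      have hpim : |p.im| ≤ Real.pi/2/b := by
        have h5 := hp.2
        rw [show ((⟨0,0⟩:ℂ)).im = (0:ℝ) from rfl, show ((⟨2*Real.pi,η⟩:ℂ)).im = η from rfl,
          Set.uIcc_of_le hη.le] at h5
        rw [abs_le]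
        exact ⟨by linarith [h5.1, hη.le, hη2], by linarith [h5.2]⟩
      exact (diff_F hb n hpim).differentiableWithinAt
    have hrect := Complex.integral_boundary_rect_eq_zero_of_differentiableOn F
      (⟨0,0⟩:ℂ) (⟨2*Real.pi, η⟩:ℂ) hdiff
    simp only [show ((⟨0,0⟩:ℂ)).re = (0:ℝ) from rfl, show ((⟨0,0⟩:ℂ)).im = (0:ℝ) from rfl,
      show ((⟨2*Real.pi,η⟩:ℂ)).re = 2*Real.pi from rfl,
      show ((⟨2*Real.pi,η⟩:ℂ)).im = η from rfl] at hrect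
    have harg' : ∀ y : ℝ, F (((2*Real.pi : ℝ):ℂ) + (y:ℂ) * Complex.I)
        = F (((0:ℝ):ℂ) + (y:ℂ) * Complex.I) := by
      intro y
      have harg : ((2*Real.pi:ℝ):ℂ) + (y:ℂ)*Complex.I
          = ((((0:ℝ)):ℂ) + (y:ℂ)*Complex.I) + 2*(Real.pi:ℂ) := by push_cast; ring
      rw [harg, hper]
    simp only [harg'] at hrect
    have heq : (∫ x in (0:ℝ)..(2*Real.pi), F ((x:ℂ) + ((0:ℝ):ℂ) * Complex.I))
        = ∫ x in (0:ℝ)..(2*Real.pi), F ((x:ℂ) + (η:ℂ) * Complex.I) := by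
      have h9 := hrect
      simp only [smul_eq_mul] at h9
      linear_combination h9
    simp only [Complex.ofReal_zero, zero_mul, add_zero] at heq
    rw [hgoal_eq, heq]
    have hC := intervalIntegral.norm_integral_le_of_norm_le_const
      (C := 3/2 * Real.exp ((n:ℝ) * η))
      (f := fun x : ℝ => F ((x:ℂ) + (η:ℂ) * Complex.I)) (a := 0) (b := 2*Real.pi)
      (fun x _ => hbound η x (by rw [abs_of_pos hη])
      )
    have hnat : Real.exp (-((n.natAbs : ℝ) * η)) = Real.exp ((n:ℝ) * η) := by
      congr 1
      rw [Nat.cast_natAbs]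
      push_cast
      rw [abs_of_neg (by exact_mod_cast hn : ((n:ℝ) < 0))]
      ring
    calc ‖∫ x in (0:ℝ)..(2*Real.pi), F ((x:ℂ) + (η:ℂ) * Complex.I)‖
        ≤ 3/2 * Real.exp ((n:ℝ) * η) * |2*Real.pi - 0| := hC
      _ = 3/2 * Real.exp (-((n.natAbs:ℝ) * η)) * (2*Real.pi) := by
          rw [hnat, sub_zero, abs_of_pos (by positivity : (0:ℝ) < 2*Real.pi)]
  · -- n = 0
    subst hn
    rw [hgoal_eq]
    have hC := intervalIntegral.norm_integral_le_of_norm_le_const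
      (C := 3/2 * Real.exp ((0:ℝ)))
      (f := fun x : ℝ => F ((x:ℂ))) (a := 0) (b := 2*Real.pi)
      (fun x _ => by
        have := hbound 0 x (by simp [hη.le])
        simpa using this)
    simp only [Int.natAbs_zero] at *
    calc ‖∫ x in (0:ℝ)..(2*Real.pi), F ((x:ℂ))‖
        ≤ 3/2 * Real.exp 0 * |2*Real.pi - 0| := hC
      _ = 3/2 * Real.exp (-((0:ℕ) * η)) * (2*Real.pi) := by
          rw [sub_zero, abs_of_pos (by positivity : (0:ℝ) < 2*Real.pi)]
          norm_num
    
  · -- n > 0 : shift down to height -η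
    have hdiff : DifferentiableOn ℂ F
        (Set.uIcc ((⟨0,-η⟩:ℂ)).re ((⟨2*Real.pi, 0⟩:ℂ)).re ×ℂ
          Set.uIcc ((⟨0,-η⟩:ℂ)).im ((⟨2*Real.pi, 0⟩:ℂ)).im) := by
      intro p hp
      rw [Complex.mem_reProdIm] at hp
      have hpim : |p.im| ≤ Real.pi/2/b := by
        have h5 := hp.2
        rw [show ((⟨0,-η⟩:ℂ)).im = (-η:ℝ) from rfl, show ((⟨2*Real.pi,0⟩:ℂ)).im = (0:ℝ) from rfl,
          Set.uIcc_of_le (by linarith : (-η:ℝ) ≤ 0)] at h5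
        rw [abs_le]
        exact ⟨by linarith [h5.1], by linarith [h5.2, hη.le, hη2]⟩
      exact (diff_F hb n hpim).differentiableWithinAt
    have hrect := Complex.integral_boundary_rect_eq_zero_of_differentiableOn F
      (⟨0,-η⟩:ℂ) (⟨2*Real.pi, 0⟩:ℂ) hdiff
    simp only [show ((⟨0,-η⟩:ℂ)).re = (0:ℝ) from rfl, show ((⟨0,-η⟩:ℂ)).im = (-η:ℝ) from rfl,
      show ((⟨2*Real.pi,0⟩:ℂ)).re = 2*Real.pi from rfl,
      show ((⟨2*Real.pi,0⟩:ℂ)).im = (0:ℝ) from rfl] at hrect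
    have harg' : ∀ y : ℝ, F (((2*Real.pi : ℝ):ℂ) + (y:ℂ) * Complex.I)
        = F (((0:ℝ):ℂ) + (y:ℂ) * Complex.I) := by
      intro y
      have harg : ((2*Real.pi:ℝ):ℂ) + (y:ℂ)*Complex.I
          = ((((0:ℝ)):ℂ) + (y:ℂ)*Complex.I) + 2*(Real.pi:ℂ) := by push_cast; ring
      rw [harg, hper]
    simp only [harg'] at hrect
    have heq : (∫ x in (0:ℝ)..(2*Real.pi), F ((x:ℂ) + ((0:ℝ):ℂ) * Complex.I))
        = ∫ x in (0:ℝ)..(2*Real.pi), F ((x:ℂ) + ((-η:ℝ):ℂ) * Complex.I) := by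
      have h9 := hrect
      simp only [smul_eq_mul] at h9
      linear_combination -h9
    simp only [Complex.ofReal_zero, zero_mul, add_zero] at heq
    rw [hgoal_eq, heq]
    have hC := intervalIntegral.norm_integral_le_of_norm_le_const
      (C := 3/2 * Real.exp ((n:ℝ) * (-η)))
      (f := fun x : ℝ => F ((x:ℂ) + ((-η:ℝ):ℂ) * Complex.I)) (a := 0) (b := 2*Real.pi)
      (fun x _ => hbound (-η) x (by rw [abs_neg, abs_of_pos hη]))
    have hnat : Real.exp (-((n.natAbs : ℝ) * η)) = Real.exp ((n:ℝ) * (-η)) := by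
      congr 1
      rw [Nat.cast_natAbs]
      push_cast
      rw [abs_of_pos (by exact_mod_cast hn : ((0:ℝ) < n))]
      ring
    calc ‖∫ x in (0:ℝ)..(2*Real.pi), F ((x:ℂ) + ((-η:ℝ):ℂ) * Complex.I)‖
        ≤ 3/2 * Real.exp ((n:ℝ) * (-η)) * |2*Real.pi - 0| := hC
      _ = 3/2 * Real.exp (-((n.natAbs:ℝ) * η)) * (2*Real.pi) := by
          rw [hnat, sub_zero, abs_of_pos (by positivity : (0:ℝ) < 2*Real.pi)]

end contour

instance : Fact ((0:ℝ) < 2*Real.pi) := ⟨by positivity⟩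

lemma Gc_periodic (b : ℝ) : Function.Periodic (Gc b) (2*Real.pi) := by
  intro x
  unfold Gc
  rw [show ((x + 2*Real.pi : ℝ) : ℂ) = (x:ℂ) + 2*(Real.pi:ℂ) by push_cast; ring,
    Complex.cos_add_two_pi]

lemma Gc_continuous (b : ℝ) : Continuous (Gc b) := by
  have h : Gc b = fun x => ((gR b x : ℝ) : ℂ) := funext (Gc_eq b)
  rw [h]
  apply Complex.continuous_ofReal.comp
  unfold gR
  apply Continuous.div_const
  apply Continuous.log
  · fun_prop
  · intro x
    positivity

noncomputable def gam (b : ℝ) : C(AddCircle (2*Real.pi), ℂ) :=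
  ⟨(Gc_periodic b).lift, (Gc_continuous b).quotient_liftOn' _⟩

lemma gam_coe (b : ℝ) (x : ℝ) : gam b ((x : ℝ) : AddCircle (2*Real.pi)) = Gc b x := rfl

noncomputable def fc (b : ℝ) (n : ℤ) : ℂ := fourierCoeff (⇑(gam b)) n

lemma fourier_eq (n : ℤ) (x : ℝ) :
    (fourier n ((x : ℝ) : AddCircle (2*Real.pi)) : ℂ) = Complex.exp (Complex.I * n * x) := by
  rw [fourier_coe_apply]
  congr 1
  have h2 : (2*(Real.pi : ℂ)) ≠ 0 := by
    simp [Real.pi_ne_zero]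
  rw [show ((2*Real.pi : ℝ) : ℂ) = 2*(Real.pi:ℂ) by push_cast; ring]
  rw [show 2*(Real.pi:ℂ)*Complex.I*(n:ℂ)*(x:ℂ) = (Complex.I*(n:ℂ)*(x:ℂ)) * (2*(Real.pi:ℂ)) by ring]
  rw [mul_div_assoc, div_self h2, mul_one]

lemma fc_eq (b : ℝ) (n : ℤ) (a : ℝ) :
    fc b n = (1/(2*Real.pi)) • ∫ x in a..(a + 2*Real.pi),
      Complex.exp (-(Complex.I * n * x)) * Gc b x := by
  rw [fc, fourierCoeff_eq_intervalIntegral _ n a]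
  congr 1
  apply intervalIntegral.integral_congr
  intro x _
  show (fourier (-n) ((x : ℝ) : AddCircle (2*Real.pi)) : ℂ) • gam b ((x:ℝ) : AddCircle (2*Real.pi))
      = _
  rw [smul_eq_mul, gam_coe, fourier_eq (-n) x]
  congr 2
  push_cast
  ring

lemma fc_bound {b : ℝ} (hb : Real.pi < b) (n : ℤ) :
    ‖fc b n‖ ≤ 3/2 * Real.exp (-(n.natAbs * (Real.pi/4/b))) := by
  have h := contour_bound hb n
  rw [fc_eq b n 0, zero_add, norm_smul, Real.norm_eq_abs,
    abs_of_pos (by positivity : (0:ℝ) < 1/(2*Real.pi))]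
  calc 1/(2*Real.pi) * ‖∫ x in (0:ℝ)..(2*Real.pi), Complex.exp (-(Complex.I * n * x)) * Gc b x‖
      ≤ 1/(2*Real.pi) * (3/2 * Real.exp (-(n.natAbs * (Real.pi/4/b))) * (2*Real.pi)) := by
        gcongr
    _ = 3/2 * Real.exp (-(n.natAbs * (Real.pi/4/b))) := by
        field_simp
  
lemma my_integral_conj (f : ℝ → ℂ) (a b : ℝ) :
    ∫ x in a..b, (starRingEnd ℂ) (f x) = (starRingEnd ℂ) (∫ x in a..b, f x) := by
  rw [intervalIntegral.intervalIntegral_eq_integral_uIoc, intervalIntegral.intervalIntegral_eq_integral_uIoc,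
    integral_conj]
  rcases le_or_gt a b with h|h
  · simp [h, Complex.real_smul, Complex.conj_ofReal]
  · simp [not_le.mpr h, Complex.real_smul, Complex.conj_ofReal, map_neg]

lemma fc_even (b : ℝ) (n : ℤ) : fc b (-n) = fc b n := by
  rw [fc_eq b n (-Real.pi), fc_eq b (-n) (-Real.pi),
    show -Real.pi + 2*Real.pi = Real.pi by ring]
  congr 1
  have h := intervalIntegral.integral_comp_neg
    (a := -Real.pi) (b := Real.pi) (fun x => Complex.exp (-(Complex.I * n * x)) * Gc b x)
  rw [neg_neg] at h
  rw [← h]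
  apply intervalIntegral.integral_congr
  intro x _
  simp only
  have h1 : Gc b (-x) = Gc b x := by
    unfold Gc
    rw [show ((-x : ℝ) : ℂ) = -(x:ℂ) by push_cast; ring, Complex.cos_neg]
  rw [h1]
  congr 2
  push_cast
  ring

lemma fc_real (b : ℝ) (n : ℤ) : (fc b n).im = 0 := by
  rw [← Complex.conj_eq_iff_im]
  have key : (starRingEnd ℂ) (fc b n) = fc b (-n) := by
    rw [fc_eq b n (-Real.pi), fc_eq b (-n) (-Real.pi),
      show -Real.pi + 2*Real.pi = Real.pi by ring,
      Complex.real_smul, Complex.real_smul, map_mul, Complex.conj_ofReal,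
      ← my_integral_conj]
    congr 1
    apply intervalIntegral.integral_congr
    intro x _
    simp only
    rw [map_mul, ← Complex.exp_conj]
    rw [Gc_eq, Complex.conj_ofReal, ← Gc_eq]
    congr 2
    simp only [map_neg, map_mul, Complex.conj_I, Complex.conj_ofReal, map_intCast]
    push_cast
    ring
  rw [key, fc_even]

lemma natAbs_mem_Icc {d : ℕ} (n : ℕ) : ((n:ℤ) ∈ Finset.Icc (-(d:ℤ)) (d:ℤ)) ↔ n ≤ d := by
  rw [Finset.mem_Icc]
  constructor
  · intro h; exact_mod_cast h.2
  · intro h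
    refine ⟨le_trans (by simp) (Int.ofNat_nonneg n), by exact_mod_cast h⟩

lemma neg_mem_Icc {d : ℕ} (n : ℕ) : ((-(n+1):ℤ) ∈ Finset.Icc (-(d:ℤ)) (d:ℤ)) ↔ n + 1 ≤ d := by
  rw [Finset.mem_Icc]
  constructor
  · intro h
    have := h.1
    omega
  · intro h
    omega

lemma geo_shift (r : ℝ) (h0 : 0 ≤ r) (h1 : r < 1) (k : ℕ) :
    HasSum (fun n : ℕ => (3:ℝ)/2 * r^(n + k)) (3/2 * r^k * (1-r)⁻¹) := by
  have h := (hasSum_geometric_of_lt_one h0 h1).mul_left ((3:ℝ)/2 * r^k)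
  have hfun : (fun n : ℕ => (3:ℝ)/2 * r^k * r^n) = fun n : ℕ => (3:ℝ)/2 * r^(n+k) := by
    funext n
    rw [pow_add]
    ring
  rw [hfun] at h
  exact h

lemma tail_hasSum (r : ℝ) (h0 : 0 ≤ r) (h1 : r < 1) (d : ℕ) :
    HasSum (fun i : ℤ => if i ∈ Finset.Icc (-(d:ℤ)) (d:ℤ) then 0 else (3:ℝ)/2 * r^(i.natAbs))
      (3 * r^(d+1) * (1-r)⁻¹) := by
  set w : ℤ → ℝ := fun i => if i ∈ Finset.Icc (-(d:ℤ)) (d:ℤ) then 0 else (3:ℝ)/2 * r^(i.natAbs)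
    with hw
  have hA : HasSum (fun n : ℕ => w n) (3/2 * r^(d+1) * (1-r)⁻¹) := by
    have hfun : (fun n : ℕ => w n) = fun n : ℕ => if n ≤ d then 0 else (3:ℝ)/2 * r^n := by
      funext n
      rw [hw]
      simp only [natAbs_mem_Icc, Int.natAbs_natCast]
    rw [hfun]
    apply (hasSum_nat_add_iff' (d+1)).mp
    have hsum0 : (∑ i ∈ Finset.range (d+1), if i ≤ d then (0:ℝ) else (3:ℝ)/2 * r^i) = 0 := by
      apply Finset.sum_eq_zero
      intro i hi
      rw [Finset.mem_range] at hi
      simp [Nat.lt_succ_iff.mp hi]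
    rw [hsum0, sub_zero]
    have hfun2 : (fun n : ℕ => if n + (d+1) ≤ d then (0:ℝ) else (3:ℝ)/2 * r^(n+(d+1)))
        = fun n : ℕ => (3:ℝ)/2 * r^(n + (d+1)) := by
      funext n
      have : ¬ (n + (d+1) ≤ d) := by omega
      simp [this]
    rw [hfun2]
    exact geo_shift r h0 h1 (d+1)
  have hB : HasSum (fun n : ℕ => w (-(↑n+1))) (3/2 * r^(d+1) * (1-r)⁻¹) := by
    have hfun : (fun n : ℕ => w (-(↑n+1))) = fun n : ℕ => if n + 1 ≤ d then 0 else (3:ℝ)/2 * r^(n+1) := by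
      funext n
      rw [hw]
      simp only
      have hm : ((-(↑n+1):ℤ) ∈ Finset.Icc (-(d:ℤ)) (d:ℤ)) ↔ n + 1 ≤ d := by
        rw [show (-(↑n+1):ℤ) = (-((n:ℤ)+1)) by ring]
        exact_mod_cast neg_mem_Icc n
      have hnat : ((-(↑n+1):ℤ)).natAbs = n + 1 := by
        omega
      rw [hnat]
      exact if_congr hm rfl rfl
    rw [hfun]
    apply (hasSum_nat_add_iff' d).mp
    have hsum0 : (∑ i ∈ Finset.range d, if i + 1 ≤ d then (0:ℝ) else (3:ℝ)/2 * r^(i+1)) = 0 := by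
      apply Finset.sum_eq_zero
      intro i hi
      rw [Finset.mem_range] at hi
      simp [Nat.succ_le.mpr hi]
    rw [hsum0, sub_zero]
    have hfun2 : (fun n : ℕ => if (n + d) + 1 ≤ d then (0:ℝ) else (3:ℝ)/2 * r^((n+d)+1))
        = fun n : ℕ => (3:ℝ)/2 * r^(n + (d+1)) := by
      funext n
      have h4 : ¬ ((n + d) + 1 ≤ d) := by omega
      simp only [h4, if_false]
      rw [show n + d + 1 = n + (d+1) by omega]
    rw [hfun2]
    exact geo_shift r h0 h1 (d+1)
  have := HasSum.of_nat_of_neg_add_one hA hB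
  convert this using 1
  ring

lemma full_summable (r : ℝ) (h0 : 0 ≤ r) (h1 : r < 1) :
    Summable (fun i : ℤ => (3:ℝ)/2 * r^(i.natAbs)) := by
  apply Summable.of_nat_of_neg_add_one
  · simp only [Int.natAbs_natCast]
    exact ((hasSum_geometric_of_lt_one h0 h1).mul_left ((3:ℝ)/2)).summable
  · have : ∀ n : ℕ, ((-(↑n+1):ℤ)).natAbs = n + 1 := by intro n; omega
    simp only [this]
    exact (geo_shift r h0 h1 1).summable

lemma natDegree_T_le : ∀ n : ℕ, (Polynomial.Chebyshev.T ℝ (n:ℤ)).natDegree ≤ n := by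
  intro n
  induction n using Nat.strong_induction_on with
  | _ n ih =>
    match n with
    | 0 => simp [Polynomial.Chebyshev.T_zero]
    | 1 =>
      rw [show ((1:ℕ):ℤ) = 1 by norm_num, Polynomial.Chebyshev.T_one]
      exact natDegree_X_le
    | (m+2) =>
      rw [show ((m+2:ℕ):ℤ) = ((m:ℤ) + 2) by push_cast; ring, Polynomial.Chebyshev.T_add_two]
      refine le_trans (natDegree_sub_le _ _) (max_le ?_ ?_)
      · refine le_trans (natDegree_mul_le) ?_
        have h1 : (2 * Polynomial.X : Polynomial ℝ).natDegree ≤ 1 := by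
          refine le_trans natDegree_mul_le ?_
          simp [natDegree_X_le]
        have h2 : (Polynomial.Chebyshev.T ℝ ((m:ℤ)+1)).natDegree ≤ m+1 := by
          have := ih (m+1) (by omega)
          rwa [show (((m+1:ℕ)):ℤ) = (m:ℤ)+1 by push_cast; ring] at this
        omega
      · have := ih m (by omega)
        omega

lemma natDegree_T_le' (d : ℕ) (i : ℤ) (hi : i ∈ Finset.Icc (-(d:ℤ)) (d:ℤ)) :
    (Polynomial.Chebyshev.T ℝ i).natDegree ≤ d := by
  have hle : i.natAbs ≤ d := by
    rw [Finset.mem_Icc] at hi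
    omega
  rcases Int.natAbs_eq i with h | h
  · rw [h]
    exact le_trans (natDegree_T_le i.natAbs) hle
  · rw [h, Polynomial.Chebyshev.T_neg]
    exact le_trans (natDegree_T_le i.natAbs) hle


end SPaux

open SPaux

/-- For every `β > π`, `d ≥ 7`, and `0 < τ < 1/2`, there exists a polynomial `q` of
degree at most `d` with
`sup_{x ∈ [−1,1]} |q(x) − (1/β) log(1 + e^{βx})| ≤ (12β/π) e^{−πd/(4β)}`. -/
theorem softplus_poly_approx (β : ℝ) (hβ : Real.pi < β) (d : ℕ) (hd : 7 ≤ d)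
    (τ : ℝ) (hτ0 : 0 < τ) (hτ : τ < 1 / 2) :
    ∃ q : Polynomial ℝ, q.degree ≤ d ∧
      ∀ x ∈ Set.Icc (-1 : ℝ) 1,
        |q.eval x - (1 / β) * Real.log (1 + Real.exp (β * x))| ≤
          (12 * β / Real.pi) * Real.exp (-(Real.pi * d) / (4 * β)) := by
  have hbpos : 0 < β := lt_trans Real.pi_pos hβ
  set η : ℝ := Real.pi/4/β with hηdef
  have hη : 0 < η := by positivity
  set r : ℝ := Real.exp (-η) with hrdef
  have hr0 : 0 < r := Real.exp_pos _
  have hr1 : r < 1 := by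
    rw [hrdef, show (1:ℝ) = Real.exp 0 by simp]
    exact Real.exp_lt_exp.mpr (by linarith)
  have h1r : 0 < 1 - r := by linarith
  -- coefficient bound in geometric form
  have hcr : ∀ n : ℤ, ‖fc β n‖ ≤ 3/2 * r^(n.natAbs) := by
    intro n
    have h := fc_bound hβ n
    rwa [show -((n.natAbs : ℝ) * (Real.pi/4/β)) = (n.natAbs : ℕ) * (-η) by rw [hηdef]; push_cast; ring,
      Real.exp_nat_mul, ← hrdef] at h
  have hsum : Summable (fc β) :=
    Summable.of_norm_bounded (full_summable r hr0.le hr1) hcr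
  set s : Finset ℤ := Finset.Icc (-(d:ℤ)) (d:ℤ) with hsdef
  -- the polynomial
  set q : Polynomial ℝ :=
    Polynomial.C (1/2 : ℝ) * Polynomial.X +
      ∑ i ∈ s, Polynomial.C ((fc β i).re) * Polynomial.Chebyshev.T ℝ i with hqdef
  refine ⟨q, ?_, ?_⟩
  · -- degree bound
    apply Polynomial.degree_le_of_natDegree_le
    refine le_trans (Polynomial.natDegree_add_le _ _) (max_le ?_ ?_)
    · refine le_trans (Polynomial.natDegree_mul_le) ?_
      have := Polynomial.natDegree_X_le (R := ℝ)
      simp only [Polynomial.natDegree_C]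
      omega
    · apply Polynomial.natDegree_sum_le_of_forall_le
      intro i hi
      refine le_trans (Polynomial.natDegree_mul_le) ?_
      simp only [Polynomial.natDegree_C, zero_add]
      exact natDegree_T_le' d i hi
  · -- approximation bound
    intro x hx
    set θ : ℝ := Real.arccos x with hθdef
    have hcosθ : Real.cos θ = x := Real.cos_arccos hx.1 hx.2
    -- pointwise Fourier expansion
    have hps : HasSum (fun i : ℤ => fc β i • (fourier i ((θ:ℝ) : AddCircle (2*Real.pi)) : ℂ))
        (gam β ((θ:ℝ) : AddCircle (2*Real.pi))) :=
      has_pointwise_sum_fourier_series_of_summable (f := gam β) hsum ((θ : ℝ) : AddCircle (2*Real.pi))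
    have h1 : ∀ i : ℤ, fc β i • (fourier i ((θ:ℝ) : AddCircle (2*Real.pi)) : ℂ)
        = fc β i * Complex.exp (Complex.I * i * θ) := by
      intro i
      rw [smul_eq_mul, fourier_eq]
    have h2 : gam β ((θ:ℝ) : AddCircle (2*Real.pi)) = ((gR β θ : ℝ) : ℂ) := by
      rw [gam_coe, Gc_eq]
    simp only [h1, h2] at hps
    set u : ℤ → ℂ := fun i => fc β i * Complex.exp (Complex.I * i * θ) with hudef
    have hsummable_u : Summable u := hps.summable
    have hsplit := hsummable_u.sum_add_tsum_compl (s := s)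
    rw [hps.tsum_eq] at hsplit
    -- norm bound for u
    have hnu : ∀ i : ℤ, ‖u i‖ = ‖fc β i‖ := by
      intro i
      rw [hudef]
      simp only [norm_mul]
      have : ‖Complex.exp (Complex.I * i * θ)‖ = 1 := by
        rw [Complex.norm_exp]
        have : (Complex.I * i * θ).re = 0 := by simp [Complex.mul_re]
        rw [this, Real.exp_zero]
      rw [this, mul_one]
    -- tail bound
    have hW := tail_hasSum r hr0.le hr1 d
    have hWs : Summable (fun i : ℤ => if i ∈ s then 0 else (3:ℝ)/2 * r^(i.natAbs)) := hW.summable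
    have hWtsum : ∑' (i : ↑((↑s : Set ℤ)ᶜ)),
        (if (i:ℤ) ∈ s then 0 else (3:ℝ)/2 * r^((i:ℤ).natAbs)) = 3 * r^(d+1) * (1-r)⁻¹ := by
      have h3 := hWs.sum_add_tsum_compl (s := s)
      rw [hW.tsum_eq] at h3
      have h4 : (∑ i ∈ s, if i ∈ s then 0 else (3:ℝ)/2 * r^(i.natAbs)) = 0 :=
        Finset.sum_eq_zero (fun i hi => if_pos hi)
      rw [h4, zero_add] at h3
      exact h3
    have hle_u : ∀ i : ℤ, ‖u i‖ ≤ (3:ℝ)/2 * r^(i.natAbs) := by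
      intro i
      rw [hnu i]
      exact hcr i
    have hnorm_full : Summable (fun i : ℤ => ‖u i‖) :=
      Summable.of_nonneg_of_le (fun i => norm_nonneg _) hle_u (full_summable r hr0.le hr1)
    have htail : ‖∑' (i : ↑((↑s : Set ℤ)ᶜ)), u ↑i‖ ≤ 3 * r^(d+1) * (1-r)⁻¹ := by
      calc ‖∑' (i : ↑((↑s : Set ℤ)ᶜ)), u ↑i‖
          ≤ ∑' (i : ↑((↑s : Set ℤ)ᶜ)), ‖u ↑i‖ :=
            norm_tsum_le_tsum_norm (hnorm_full.subtype _)
        _ ≤ ∑' (i : ↑((↑s : Set ℤ)ᶜ)), (if (i:ℤ) ∈ s then 0 else (3:ℝ)/2 * r^((i:ℤ).natAbs)) := by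
            apply Summable.tsum_le_tsum
            · intro i
              have hni : (i:ℤ) ∉ s := i.2
              rw [if_neg hni, hnu]
              exact hcr i
            · exact hnorm_full.subtype _
            · exact hWs.subtype _
        _ = 3 * r^(d+1) * (1-r)⁻¹ := hWtsum
    -- evaluation of q
    have heval : q.eval x = x/2 + ∑ i ∈ s, (fc β i).re * Real.cos (i*θ) := by
      rw [hqdef]
      rw [Polynomial.eval_add, Polynomial.eval_mul, Polynomial.eval_C, Polynomial.eval_X,
        Polynomial.eval_finset_sum]
      congr 1
      · ring
      · apply Finset.sum_congr rfl
        intro i _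
        rw [Polynomial.eval_mul, Polynomial.eval_C, ← hcosθ, Polynomial.Chebyshev.T_real_cos]
    -- real part of partial sum
    have hre_sum : (∑ i ∈ s, u i).re = ∑ i ∈ s, (fc β i).re * Real.cos (i*θ) := by
      rw [Complex.re_sum]
      apply Finset.sum_congr rfl
      intro i _
      rw [hudef]
      simp only
      have hE : Complex.I * (i:ℂ) * (θ:ℂ) = ((i*θ : ℝ) : ℂ) * Complex.I := by
        push_cast; ring
      rw [Complex.mul_re, hE, Complex.exp_ofReal_mul_I_re, Complex.exp_ofReal_mul_I_im,
        fc_real, zero_mul, sub_zero]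
    -- softplus identity
    have hsoft : (1/β) * Real.log (1 + Real.exp (β*x)) = x/2 + gR β θ := by
      have hexp1 : Real.exp (β*x) = Real.exp (β*x/2) * Real.exp (β*x/2) := by
        rw [← Real.exp_add]; ring_nf
      have hexp2 : Real.exp (β*x/2) * Real.exp (-(β*x/2)) = 1 := by
        rw [← Real.exp_add]; simp
      have hprod : 1 + Real.exp (β*x) = Real.exp (β*x/2) * (2 * Real.cosh (β*x/2)) := by
        rw [Real.cosh_eq]
        nlinarith [hexp1, hexp2]
      have hgr : gR β θ = Real.log (2 * Real.cosh (β*x/2)) / β := by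
        rw [gR, hcosθ]
      rw [hprod, Real.log_mul (Real.exp_ne_zero _) (by positivity), Real.log_exp, hgr]
      field_simp
    -- put together
    have hdiff : q.eval x - (1/β) * Real.log (1 + Real.exp (β*x))
        = ((∑ i ∈ s, u i) - ((gR β θ : ℝ):ℂ)).re := by
      rw [heval, hsoft, Complex.sub_re, hre_sum, Complex.ofReal_re]
      ring
    have hkey : (∑ i ∈ s, u i) - ((gR β θ : ℝ):ℂ) = -(∑' (i : ↑((↑s : Set ℤ)ᶜ)), u ↑i) := by
      rw [← hsplit]; ring
    rw [hdiff, hkey]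
    -- final numeric bound
    have habs : |(-(∑' (i : ↑((↑s : Set ℤ)ᶜ)), u ↑i)).re| ≤ 3 * r^(d+1) * (1-r)⁻¹ := by
      refine le_trans (Complex.abs_re_le_norm _) ?_
      rw [norm_neg]
      exact htail
    refine le_trans habs ?_
    -- 3 r^{d+1} (1-r)⁻¹ ≤ (12β/π) exp(-πd/(4β))
    have hrd : r^d = Real.exp (-(Real.pi*d)/(4*β)) := by
      rw [hrdef, ← Real.exp_nat_mul]
      congr 1
      rw [hηdef]
      field_simp
    have hratio : r/(1-r) ≤ 1/η := by
      rw [div_le_div_iff₀ h1r hη]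
      have hexpη : 1 + η ≤ Real.exp η := by
        have := Real.add_one_le_exp η; linarith
      have hrr : r * Real.exp η = 1 := by
        rw [hrdef, ← Real.exp_add]; simp
      nlinarith
    have hinvη : 1/η = 4*β/Real.pi := by
      rw [hηdef]
      field_simp
    calc 3 * r^(d+1) * (1-r)⁻¹ = (r/(1-r) * 3) * r^d := by
          rw [pow_succ, div_eq_mul_inv]; ring
      _ ≤ ((1/η) * 3) * r^d := by
          have := pow_nonneg hr0.le d
          gcongr
      _ = (12*β/Real.pi) * Real.exp (-(Real.pi*d)/(4*β)) := by
          rw [hinvη, hrd]; ring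
end

section
/- (Lower bound for linear predictors) In the model X = AZ + ξ with A orthogonal n×n, w ∈ {±1}^n, Z with i.i.d. coordinates equal to N(0,γ²) with probability k/n and 0 otherwise, ξ ~ N(0,σ²I), and Y = ⟨w,Z⟩: for every w̃ ∈ ℝ^n, E[(⟨w̃, X⟩ − Y)²] ≥ γ²k·σ²/(γ²(k/n) + σ²). -/
open Matrix MeasureTheory ProbabilityTheory NNReal

section Aux
open Real Filter

-- ===== general pi-measure product lemmas =====
lemma pi_integral_prod {n : ℕ} (m : Measure ℝ) [SigmaFinite m] (f : Fin n → ℝ → ℝ) :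
    ∫ x : Fin n → ℝ, ∏ i, f i (x i) ∂(Measure.pi fun _ => m) = ∏ i, ∫ x, f i x ∂m := by
  letI : MeasureSpace ℝ := ⟨m⟩
  haveI : SigmaFinite (volume : Measure ℝ) := ‹_›
  exact MeasureTheory.integral_fintype_prod_eq_prod f

lemma pi_integrable_prod {n : ℕ} (m : Measure ℝ) [SigmaFinite m] (f : Fin n → ℝ → ℝ)
    (hf : ∀ i, Integrable (f i) m) :
    Integrable (fun x : Fin n → ℝ => ∏ i, f i (x i)) (Measure.pi fun _ => m) := by
  letI : MeasureSpace ℝ := ⟨m⟩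
  haveI : SigmaFinite (volume : Measure ℝ) := ‹_›
  exact MeasureTheory.Integrable.fintype_prod hf

lemma coord_prod_eq {n : ℕ} (j l : Fin n) (z : Fin n → ℝ) :
    (∏ i, ((if i = j then z i else 1) * (if i = l then z i else 1))) = z j * z l := by
  rw [Finset.prod_mul_distrib]
  simp

lemma coord_mul_integrable {n : ℕ} (m : Measure ℝ) [IsProbabilityMeasure m]
    (h1 : Integrable (fun x : ℝ => x) m) (h2 : Integrable (fun x : ℝ => x ^ 2) m)
    (j l : Fin n) :
    Integrable (fun z : Fin n → ℝ => z j * z l) (Measure.pi fun _ => m) := by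
  have h2' : Integrable (fun x : ℝ => x * x) m :=
    h2.congr (Filter.Eventually.of_forall fun x => pow_two x)
  have := pi_integrable_prod m
    (fun i t => (if i = j then t else 1) * (if i = l then t else 1)) ?_
  · refine this.congr (Filter.Eventually.of_forall fun z => ?_)
    exact coord_prod_eq j l z
  · intro i
    by_cases hij : i = j
    · subst hij
      by_cases hil : i = l
      · subst hil
        simpa using h2'
      · simp only [if_pos rfl, if_neg hil, mul_one]
        exact h1
    · by_cases hil : i = l
      · subst hil
        simp only [if_neg hij, if_pos rfl, one_mul]
        exact h1
      · simp only [if_neg hij, if_neg hil, mul_one]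
        exact integrable_const 1

lemma coord_mul_integral {n : ℕ} (m : Measure ℝ) [IsProbabilityMeasure m]
    (hm1 : ∫ x, x ∂m = 0) (j l : Fin n) :
    ∫ z : Fin n → ℝ, z j * z l ∂(Measure.pi fun _ => m)
      = if j = l then ∫ x, x ^ 2 ∂m else 0 := by
  have e1 : ∫ z : Fin n → ℝ, z j * z l ∂(Measure.pi fun _ => m)
      = ∏ i, ∫ x, (if i = j then x else 1) * (if i = l then x else 1) ∂m := by
    rw [← pi_integral_prod m (fun i t => (if i = j then t else 1) * (if i = l then t else 1))]
    congr 1; funext z; exact (coord_prod_eq j l z).symm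
  rw [e1]
  by_cases hjl : j = l
  · subst hjl
    rw [if_pos rfl]
    have : ∀ i : Fin n, (∫ x, (if i = j then x else 1) * (if i = j then x else 1) ∂m)
        = if i = j then ∫ x, x ^ 2 ∂m else 1 := by
      intro i
      by_cases hij : i = j
      · subst hij
        rw [if_pos rfl]
        congr 1; funext x
        rw [if_pos rfl, pow_two]
      · rw [if_neg hij]
        simp only [if_neg hij, mul_one]
        simp
    simp_rw [this]
    simp
  · rw [if_neg hjl]
    refine Finset.prod_eq_zero (Finset.mem_univ j) ?_
    simp only [if_pos rfl, if_neg hjl, mul_one]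
    exact hm1

lemma coord_integrable {n : ℕ} (m : Measure ℝ) [IsProbabilityMeasure m]
    (h1 : Integrable (fun x : ℝ => x) m) (j : Fin n) :
    Integrable (fun z : Fin n → ℝ => z j) (Measure.pi fun _ => m) := by
  have := pi_integrable_prod m (fun i t => if i = j then t else 1) ?_
  · refine this.congr (Filter.Eventually.of_forall fun z => ?_)
    simp
  · intro i
    by_cases hij : i = j
    · subst hij; simpa using h1
    · simp only [if_neg hij]; exact integrable_const 1

lemma coord_integral {n : ℕ} (m : Measure ℝ) [IsProbabilityMeasure m]
    (hm1 : ∫ x, x ∂m = 0) (j : Fin n) :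
    ∫ z : Fin n → ℝ, z j ∂(Measure.pi fun _ => m) = 0 := by
  have e1 : ∫ z : Fin n → ℝ, z j ∂(Measure.pi fun _ => m)
      = ∏ i, ∫ x, (if i = j then x else 1) ∂m := by
    rw [← pi_integral_prod m (fun i t => if i = j then t else 1)]
    congr 1; funext z; simp
  rw [e1]
  refine Finset.prod_eq_zero (Finset.mem_univ j) ?_
  simpa using hm1

-- ===== sums of coordinates =====
lemma sum_expand {n : ℕ} (c : Fin n → ℝ) (z : Fin n → ℝ) :
    (∑ j, c j * z j) ^ 2 = ∑ j, ∑ l, (c j * c l) * (z j * z l) := by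
  rw [pow_two, Finset.sum_mul_sum]
  exact Finset.sum_congr rfl fun j _ => Finset.sum_congr rfl fun l _ => by ring

lemma sum_integrable {n : ℕ} (m : Measure ℝ) [IsProbabilityMeasure m]
    (h1 : Integrable (fun x : ℝ => x) m) (c : Fin n → ℝ) :
    Integrable (fun z : Fin n → ℝ => ∑ j, c j * z j) (Measure.pi fun _ => m) :=
  integrable_finset_sum _ fun j _ => (coord_integrable m h1 j).const_mul (c j)

lemma sum_integral {n : ℕ} (m : Measure ℝ) [IsProbabilityMeasure m]
    (h1 : Integrable (fun x : ℝ => x) m) (hm1 : ∫ x, x ∂m = 0) (c : Fin n → ℝ) :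
    ∫ z : Fin n → ℝ, ∑ j, c j * z j ∂(Measure.pi fun _ => m) = 0 := by
  rw [integral_finset_sum _ fun j _ => (coord_integrable m h1 j).const_mul (c j)]
  refine Finset.sum_eq_zero fun j _ => ?_
  rw [MeasureTheory.integral_const_mul, coord_integral m hm1 j, mul_zero]

lemma sum_sq_integrable {n : ℕ} (m : Measure ℝ) [IsProbabilityMeasure m]
    (h1 : Integrable (fun x : ℝ => x) m) (h2 : Integrable (fun x : ℝ => x ^ 2) m)
    (c : Fin n → ℝ) :
    Integrable (fun z : Fin n → ℝ => (∑ j, c j * z j) ^ 2) (Measure.pi fun _ => m) := by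
  have : Integrable (fun z : Fin n → ℝ => ∑ j, ∑ l, (c j * c l) * (z j * z l))
      (Measure.pi fun _ => m) :=
    integrable_finset_sum _ fun j _ => integrable_finset_sum _ fun l _ =>
      (coord_mul_integrable m h1 h2 j l).const_mul _
  exact this.congr (Filter.Eventually.of_forall fun z => (sum_expand c z).symm)

lemma sum_sq_integral {n : ℕ} (m : Measure ℝ) [IsProbabilityMeasure m]
    (h1 : Integrable (fun x : ℝ => x) m) (h2 : Integrable (fun x : ℝ => x ^ 2) m)
    (hm1 : ∫ x, x ∂m = 0) (c : Fin n → ℝ) :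
    ∫ z : Fin n → ℝ, (∑ j, c j * z j) ^ 2 ∂(Measure.pi fun _ => m)
      = (∑ j, (c j) ^ 2) * ∫ x, x ^ 2 ∂m := by
  simp_rw [sum_expand c]
  rw [integral_finset_sum _ fun j _ => integrable_finset_sum _ fun l _ =>
    (coord_mul_integrable m h1 h2 j l).const_mul _]
  have : ∀ j : Fin n, (∫ z : Fin n → ℝ, ∑ l, (c j * c l) * (z j * z l)
      ∂(Measure.pi fun _ => m)) = (c j) ^ 2 * ∫ x, x ^ 2 ∂m := by
    intro j
    rw [integral_finset_sum _ fun l _ => (coord_mul_integrable m h1 h2 j l).const_mul _]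
    have : ∀ l : Fin n, (∫ z : Fin n → ℝ, (c j * c l) * (z j * z l)
        ∂(Measure.pi fun _ => m)) = if j = l then (c j * c l) * ∫ x, x ^ 2 ∂m else 0 := by
      intro l
      rw [MeasureTheory.integral_const_mul, coord_mul_integral m hm1 j l]
      by_cases hjl : j = l
      · rw [if_pos hjl, if_pos hjl]
      · rw [if_neg hjl, if_neg hjl, mul_zero]
    simp_rw [this]
    rw [Finset.sum_ite_eq Finset.univ j (fun l => (c j * c l) * ∫ x, x ^ 2 ∂m)]
    rw [if_pos (Finset.mem_univ j), pow_two, mul_assoc]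
  simp_rw [this]
  rw [← Finset.sum_mul]

-- ===== gaussian lemmas =====
lemma gauss_m2 {b : ℝ} (hb : 0 < b) :
    ∫ x : ℝ, x ^ 2 * Real.exp (-b * x ^ 2) = Real.sqrt (π / b) / (2 * b) := by
  have hu : ∀ x : ℝ, HasDerivAt (fun y : ℝ => y) 1 x := fun x => hasDerivAt_id x
  have hv : ∀ x : ℝ, HasDerivAt (fun y : ℝ => -(1 / (2 * b)) * Real.exp (-b * y ^ 2))
      (x * Real.exp (-b * x ^ 2)) x := by
    intro x
    have h1 : HasDerivAt (fun y : ℝ => -b * y ^ 2) (-b * (2 * x ^ 1)) x :=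
      ((hasDerivAt_pow 2 x).const_mul (-b))
    have h2 := (h1.exp).const_mul (-(1 / (2 * b)))
    refine h2.congr_deriv ?_
    field_simp
  have hint1 : Integrable (fun x : ℝ => x * (x * Real.exp (-b * x ^ 2))) := by
    have := integrable_rpow_mul_exp_neg_mul_sq hb (by norm_num : (-1:ℝ) < ((2:ℕ):ℝ))
    refine this.congr (Filter.Eventually.of_forall fun x => ?_)
    simp only [Real.rpow_natCast]
    ring
  have hint2 : Integrable (fun x : ℝ => 1 * (-(1 / (2 * b)) * Real.exp (-b * x ^ 2))) := by
    simpa using ((integrable_exp_neg_mul_sq hb).const_mul (-(1 / (2 * b))))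
  have hint3 : Integrable (fun x : ℝ => x * (-(1 / (2 * b)) * Real.exp (-b * x ^ 2))) := by
    have := (integrable_mul_exp_neg_mul_sq hb).const_mul (-(1 / (2 * b)))
    refine this.congr (Filter.Eventually.of_forall fun x => ?_)
    ring
  have H := MeasureTheory.integral_mul_deriv_eq_deriv_mul_of_integrable (fun x _ => hu x) (fun x _ => hv x) hint1 hint2 hint3
  have h1 : ∫ x : ℝ, x ^ 2 * Real.exp (-b * x ^ 2)
      = ∫ x : ℝ, x * (x * Real.exp (-b * x ^ 2)) := by
    congr 1; funext x; ring
  rw [h1, H]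
  rw [show (fun x : ℝ => 1 * (-(1 / (2 * b)) * Real.exp (-b * x ^ 2)))
      = fun x : ℝ => (-(1 / (2 * b))) * Real.exp (-b * x ^ 2) by funext x; ring] at *
  rw [MeasureTheory.integral_const_mul, integral_gaussian]
  field_simp

lemma gauss_transfer {v : ℝ≥0} (hv : v ≠ 0) (g : ℝ → ℝ) :
    ∫ x, g x ∂(gaussianReal 0 v) = ∫ x, gaussianPDFReal 0 v x * g x := by
  rw [gaussianReal_of_var_ne_zero 0 hv]
  have hm : Measurable fun x => (gaussianPDFReal 0 v x).toNNReal :=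
    (measurable_gaussianPDFReal 0 v).real_toNNReal
  have h2 : (gaussianPDF 0 v)
      = fun x => ENNReal.ofNNReal ((gaussianPDFReal 0 v x).toNNReal) := rfl
  rw [h2, integral_withDensity_eq_integral_smul hm]
  congr 1; funext x
  simp [NNReal.smul_def, Real.coe_toNNReal _ (gaussianPDFReal_nonneg 0 v x)]

lemma gauss_transfer_integrable {v : ℝ≥0} (hv : v ≠ 0) (g : ℝ → ℝ)
    (h : Integrable (fun x => gaussianPDFReal 0 v x * g x)) :
    Integrable g (gaussianReal 0 v) := by
  rw [gaussianReal_of_var_ne_zero 0 hv]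
  have hm : Measurable fun x => (gaussianPDFReal 0 v x).toNNReal :=
    (measurable_gaussianPDFReal 0 v).real_toNNReal
  have h2 : (gaussianPDF 0 v)
      = fun x => ENNReal.ofNNReal ((gaussianPDFReal 0 v x).toNNReal) := rfl
  rw [h2, integrable_withDensity_iff_integrable_smul hm]
  refine h.congr (Filter.Eventually.of_forall fun x => ?_)
  simp [NNReal.smul_def, Real.coe_toNNReal _ (gaussianPDFReal_nonneg 0 v x)]

lemma gauss_pdf_eq (v : ℝ≥0) (x : ℝ) :
    gaussianPDFReal 0 v x = (Real.sqrt (2 * π * v))⁻¹ * Real.exp (-(2 * (v:ℝ))⁻¹ * x ^ 2) := by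
  rw [gaussianPDFReal]
  norm_num
  left
  field_simp

lemma gauss_integrable_one (v : ℝ≥0) : Integrable (fun x => x) (gaussianReal 0 v) := by
  rcases eq_or_ne v 0 with h | h
  · rw [h, gaussianReal_zero_var]
    exact (integrable_const (0:ℝ)).congr (ae_eq_dirac (fun x : ℝ => x)).symm
  · have hv : 0 < (v:ℝ) := by positivity
    refine gauss_transfer_integrable h _ ?_
    have hb : 0 < ((2:ℝ) * (v:ℝ))⁻¹ := by positivity
    have := ((integrable_mul_exp_neg_mul_sq hb).const_mul (Real.sqrt (2 * π * v))⁻¹)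
    refine this.congr (Filter.Eventually.of_forall fun x => ?_)
    simp only [gauss_pdf_eq]
    ring

lemma gauss_integrable_sq (v : ℝ≥0) : Integrable (fun x => x ^ 2) (gaussianReal 0 v) := by
  rcases eq_or_ne v 0 with h | h
  · rw [h, gaussianReal_zero_var]
    exact (integrable_const ((0:ℝ)^2)).congr (ae_eq_dirac (fun x : ℝ => x ^ 2)).symm
  · have hv : 0 < (v:ℝ) := by positivity
    refine gauss_transfer_integrable h _ ?_
    have hb : 0 < ((2:ℝ) * (v:ℝ))⁻¹ := by positivity
    have := ((integrable_rpow_mul_exp_neg_mul_sq hb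
      (by norm_num : (-1:ℝ) < ((2:ℕ):ℝ))).const_mul (Real.sqrt (2 * π * v))⁻¹)
    refine this.congr (Filter.Eventually.of_forall fun x => ?_)
    simp only [Real.rpow_natCast, gauss_pdf_eq]
    ring

lemma gauss_moment_one (v : ℝ≥0) : ∫ x, x ∂(gaussianReal 0 v) = 0 := by
  rcases eq_or_ne v 0 with h | h
  · rw [h, gaussianReal_zero_var, integral_dirac]
  · rw [gauss_transfer h]
    have hodd : (fun x : ℝ => gaussianPDFReal 0 v (-x) * (-x))
        = fun x => -(gaussianPDFReal 0 v x * x) := by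
      funext x
      simp only [gauss_pdf_eq]
      ring_nf
    have h1 := integral_neg_eq_self (fun x : ℝ => gaussianPDFReal 0 v x * x) volume
    rw [hodd, integral_neg] at h1
    linarith

lemma gauss_moment_sq (v : ℝ≥0) : ∫ x, x ^ 2 ∂(gaussianReal 0 v) = v := by
  rcases eq_or_ne v 0 with h | h
  · rw [h, gaussianReal_zero_var, integral_dirac]
    norm_num
  · have hv : 0 < (v:ℝ) := by positivity
    rw [gauss_transfer h]
    have hb : 0 < ((2:ℝ) * (v:ℝ))⁻¹ := by positivity
    have e1 : (fun x : ℝ => gaussianPDFReal 0 v x * x ^ 2)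
        = fun x : ℝ => (Real.sqrt (2 * π * v))⁻¹
            * (x ^ 2 * Real.exp (-(2 * (v:ℝ))⁻¹ * x ^ 2)) := by
      funext x; rw [gauss_pdf_eq]; ring
    rw [e1, MeasureTheory.integral_const_mul, gauss_m2 hb]
    rw [show π / ((2:ℝ) * (v:ℝ))⁻¹ = 2 * π * v by field_simp]
    have h2 : ((2:ℝ) * ((2 * (v:ℝ))⁻¹)) = ((v:ℝ))⁻¹ := by field_simp
    rw [h2]
    have hs : 0 < Real.sqrt (2 * π * v) := Real.sqrt_pos.mpr (by positivity)
    field_simp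

-- ===== mixture lemmas =====
lemma nnsmul_measure_eq {α : Type*} [MeasurableSpace α] (c : ℝ≥0) (μ : Measure α) :
    c • μ = (ENNReal.ofNNReal c) • μ := rfl

lemma mix_prob {α : Type*} [MeasurableSpace α] {c₁ c₂ : ℝ≥0} (h : c₁ + c₂ = 1)
    (μ₁ μ₂ : Measure α) [IsProbabilityMeasure μ₁] [IsProbabilityMeasure μ₂] :
    IsProbabilityMeasure (c₁ • μ₁ + c₂ • μ₂) := by
  constructor
  rw [Measure.add_apply, nnsmul_measure_eq, nnsmul_measure_eq, Measure.smul_apply,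
    Measure.smul_apply, measure_univ, measure_univ, smul_eq_mul, smul_eq_mul, mul_one, mul_one,
    ← ENNReal.coe_add, h, ENNReal.coe_one]

lemma mix_integrable {α : Type*} [MeasurableSpace α] {c₁ c₂ : ℝ≥0} (μ₁ μ₂ : Measure α)
    {f : α → ℝ} (h₁ : Integrable f μ₁) (h₂ : Integrable f μ₂) :
    Integrable f (c₁ • μ₁ + c₂ • μ₂) := by
  rw [nnsmul_measure_eq, nnsmul_measure_eq]
  exact (h₁.smul_measure ENNReal.coe_ne_top).add_measure (h₂.smul_measure ENNReal.coe_ne_top)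

lemma mix_integral {α : Type*} [MeasurableSpace α] {c₁ c₂ : ℝ≥0} (μ₁ μ₂ : Measure α)
    {f : α → ℝ} (h₁ : Integrable f μ₁) (h₂ : Integrable f μ₂) :
    ∫ x, f x ∂(c₁ • μ₁ + c₂ • μ₂) = c₁ * ∫ x, f x ∂μ₁ + c₂ * ∫ x, f x ∂μ₂ := by
  rw [nnsmul_measure_eq, nnsmul_measure_eq]
  rw [integral_add_measure (h₁.smul_measure ENNReal.coe_ne_top)
    (h₂.smul_measure ENNReal.coe_ne_top), integral_smul_measure, integral_smul_measure]
  simp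

lemma integrable_dirac_real {f : ℝ → ℝ} : Integrable f (Measure.dirac (0:ℝ)) :=
  (integrable_const (f 0)).congr (ae_eq_dirac f).symm

end Aux

/-- Lower bound for linear predictors in the sparse latent model `X = AZ + ξ`,
`Y = ⟨w, Z⟩`, with `A` orthogonal, `w ∈ {±1}ⁿ`, `Z` with i.i.d. coordinates equal to
`N(0, γ²)` with probability `k/n` and `0` otherwise, and `ξ ~ N(0, σ²I)`: for every
linear predictor `wt`, `E[(⟨wt, X⟩ − Y)²] ≥ γ²k σ² / (γ²(k/n) + σ²)`. -/
theorem linear_predictor_lower_bound (n k : ℕ) (hn : 0 < n) (hkn : k ≤ n)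
    (A : Matrix (Fin n) (Fin n) ℝ) (hA : Aᵀ * A = 1)
    (w : Fin n → ℝ) (hw : ∀ i, w i = 1 ∨ w i = -1)
    (γ σ : ℝ≥0) (wt : Fin n → ℝ) :
    (γ : ℝ) ^ 2 * k * (σ : ℝ) ^ 2 / ((γ : ℝ) ^ 2 * ((k : ℝ) / n) + (σ : ℝ) ^ 2) ≤
    ∫ p : (Fin n → ℝ) × (Fin n → ℝ),
        ((∑ i, wt i * (A.mulVec p.1 + p.2) i) - ∑ i, w i * p.1 i) ^ 2
      ∂(Measure.prod
          (Measure.pi fun _ : Fin n =>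
            (1 - (k : ℝ≥0) / (n : ℝ≥0)) • Measure.dirac (0 : ℝ) +
              ((k : ℝ≥0) / (n : ℝ≥0)) • gaussianReal 0 (γ ^ 2))
          (Measure.pi fun _ : Fin n => gaussianReal 0 (σ ^ 2))) := by
  have hn' : ((n:ℝ)) ≠ 0 := Nat.cast_ne_zero.mpr hn.ne'
  set pr : ℝ≥0 := (k : ℝ≥0) / (n : ℝ≥0) with hpr
  set μ0 : Measure ℝ := (1 - pr) • Measure.dirac (0:ℝ) + pr • gaussianReal 0 (γ ^ 2) with hμ0
  set ν0 : Measure ℝ := gaussianReal 0 (σ ^ 2) with hν0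
  have hp1 : pr ≤ 1 := by
    rw [hpr, div_le_one (by exact_mod_cast hn)]
    exact_mod_cast hkn
  haveI : IsProbabilityMeasure μ0 := mix_prob (tsub_add_cancel_of_le hp1) _ _
  set c : Fin n → ℝ := fun j => (∑ i, wt i * A i j) - w j with hc
  set v : Fin n → ℝ := fun j => ∑ i, wt i * A i j with hv
  -- pointwise rewrite of the integrand
  have hpt : ∀ q : (Fin n → ℝ) × (Fin n → ℝ),
      ((∑ i, wt i * (A.mulVec q.1 + q.2) i) - ∑ i, w i * q.1 i) ^ 2
      = ((∑ j, c j * q.1 j) + (∑ i, wt i * q.2 i)) ^ 2 := by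
    intro q
    congr 1
    simp only [Pi.add_apply, Matrix.mulVec, dotProduct, hc, mul_add,
      Finset.sum_add_distrib, sub_mul, Finset.sum_sub_distrib, Finset.mul_sum, Finset.sum_mul]
    rw [Finset.sum_comm]
    ring_nf
  -- moments
  have hμi1 : Integrable (fun x : ℝ => x) μ0 :=
    mix_integrable _ _ integrable_dirac_real (gauss_integrable_one _)
  have hμi2 : Integrable (fun x : ℝ => x ^ 2) μ0 :=
    mix_integrable _ _ integrable_dirac_real (gauss_integrable_sq _)
  have hμm1 : ∫ x, x ∂μ0 = 0 := by
    rw [hμ0, mix_integral _ _ integrable_dirac_real (gauss_integrable_one _),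
      integral_dirac, gauss_moment_one]
    simp
  have hμm2 : (∫ x, x ^ 2 ∂μ0) = ((k:ℝ)/n) * (γ:ℝ) ^ 2 := by
    rw [hμ0, mix_integral _ _ integrable_dirac_real (gauss_integrable_sq _),
      integral_dirac, gauss_moment_sq]
    push_cast [hpr]
    ring
  have hνi1 : Integrable (fun x : ℝ => x) ν0 := gauss_integrable_one _
  have hνi2 : Integrable (fun x : ℝ => x ^ 2) ν0 := gauss_integrable_sq _
  have hνm1 : ∫ x, x ∂ν0 = 0 := gauss_moment_one _
  have hνm2 : (∫ x, x ^ 2 ∂ν0) = (σ:ℝ) ^ 2 := by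
    rw [hν0, gauss_moment_sq]
    push_cast
    ring
  -- the integral computation
  have hint_eq : (∫ q : (Fin n → ℝ) × (Fin n → ℝ),
        ((∑ i, wt i * (A.mulVec q.1 + q.2) i) - ∑ i, w i * q.1 i) ^ 2
        ∂(Measure.prod (Measure.pi fun _ : Fin n => μ0) (Measure.pi fun _ : Fin n => ν0)))
      = (∑ j, (c j) ^ 2) * (((k:ℝ)/n) * (γ:ℝ) ^ 2) + (∑ i, (wt i) ^ 2) * (σ:ℝ) ^ 2 := by
    set F : (Fin n → ℝ) → ℝ := fun z => ∑ j, c j * z j with hF'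
    set G : (Fin n → ℝ) → ℝ := fun ξ => ∑ i, wt i * ξ i with hG'
    have hF : Integrable F (Measure.pi fun _ : Fin n => μ0) := sum_integrable μ0 hμi1 c
    have hF2 : Integrable (fun z => F z ^ 2) (Measure.pi fun _ : Fin n => μ0) :=
      sum_sq_integrable μ0 hμi1 hμi2 c
    have hG : Integrable G (Measure.pi fun _ : Fin n => ν0) := sum_integrable ν0 hνi1 wt
    have hG2 : Integrable (fun ξ => G ξ ^ 2) (Measure.pi fun _ : Fin n => ν0) :=
      sum_sq_integrable ν0 hνi1 hνi2 wt
    have i1 : Integrable (fun q : (Fin n → ℝ) × (Fin n → ℝ) => (F q.1) ^ 2 * 1)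
        ((Measure.pi fun _ : Fin n => μ0).prod (Measure.pi fun _ : Fin n => ν0)) :=
      hF2.mul_prod (integrable_const 1)
    have i2 : Integrable (fun q : (Fin n → ℝ) × (Fin n → ℝ) => (2 * F q.1) * G q.2)
        ((Measure.pi fun _ : Fin n => μ0).prod (Measure.pi fun _ : Fin n => ν0)) :=
      (hF.const_mul 2).mul_prod hG
    have i3 : Integrable (fun q : (Fin n → ℝ) × (Fin n → ℝ) => (1:ℝ) * (G q.2) ^ 2)
        ((Measure.pi fun _ : Fin n => μ0).prod (Measure.pi fun _ : Fin n => ν0)) :=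
      (integrable_const 1).mul_prod hG2
    have step : (∫ q : (Fin n → ℝ) × (Fin n → ℝ),
          ((∑ i, wt i * (A.mulVec q.1 + q.2) i) - ∑ i, w i * q.1 i) ^ 2
          ∂(Measure.prod (Measure.pi fun _ : Fin n => μ0) (Measure.pi fun _ : Fin n => ν0)))
        = (∫ q : (Fin n → ℝ) × (Fin n → ℝ), (F q.1) ^ 2 * 1
            ∂((Measure.pi fun _ : Fin n => μ0).prod (Measure.pi fun _ : Fin n => ν0)))
          + ((∫ q : (Fin n → ℝ) × (Fin n → ℝ), (2 * F q.1) * G q.2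
              ∂((Measure.pi fun _ : Fin n => μ0).prod (Measure.pi fun _ : Fin n => ν0)))
            + (∫ q : (Fin n → ℝ) × (Fin n → ℝ), (1:ℝ) * (G q.2) ^ 2
              ∂((Measure.pi fun _ : Fin n => μ0).prod (Measure.pi fun _ : Fin n => ν0)))) := by
      have i23 : Integrable (fun q : (Fin n → ℝ) × (Fin n → ℝ) =>
          (2 * F q.1) * G q.2 + (1:ℝ) * (G q.2) ^ 2)
          ((Measure.pi fun _ : Fin n => μ0).prod (Measure.pi fun _ : Fin n => ν0)) := i2.add i3
      calc (∫ q : (Fin n → ℝ) × (Fin n → ℝ),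
            ((∑ i, wt i * (A.mulVec q.1 + q.2) i) - ∑ i, w i * q.1 i) ^ 2
            ∂(Measure.prod (Measure.pi fun _ : Fin n => μ0) (Measure.pi fun _ : Fin n => ν0)))
          = ∫ q : (Fin n → ℝ) × (Fin n → ℝ),
              ((F q.1) ^ 2 * 1 + ((2 * F q.1) * G q.2 + (1:ℝ) * (G q.2) ^ 2))
              ∂((Measure.pi fun _ : Fin n => μ0).prod (Measure.pi fun _ : Fin n => ν0)) := by
            refine integral_congr_ae (Filter.Eventually.of_forall fun q => ?_)
            dsimp only
            rw [hpt q]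
            simp only [hF', hG']
            ring
        _ = (∫ q : (Fin n → ℝ) × (Fin n → ℝ), (F q.1) ^ 2 * 1
              ∂((Measure.pi fun _ : Fin n => μ0).prod (Measure.pi fun _ : Fin n => ν0)))
            + (∫ q : (Fin n → ℝ) × (Fin n → ℝ), ((2 * F q.1) * G q.2 + (1:ℝ) * (G q.2) ^ 2)
              ∂((Measure.pi fun _ : Fin n => μ0).prod (Measure.pi fun _ : Fin n => ν0))) :=
            integral_add i1 i23
        _ = _ := by rw [integral_add i2 i3]
    have p1 := integral_prod_mul (μ := Measure.pi fun _ : Fin n => μ0)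
      (ν := Measure.pi fun _ : Fin n => ν0) (f := fun z => (F z) ^ 2) (g := fun _ => (1:ℝ))
    have p2 := integral_prod_mul (μ := Measure.pi fun _ : Fin n => μ0)
      (ν := Measure.pi fun _ : Fin n => ν0) (f := fun z => 2 * F z) (g := G)
    have p3 := integral_prod_mul (μ := Measure.pi fun _ : Fin n => μ0)
      (ν := Measure.pi fun _ : Fin n => ν0) (f := fun _ => (1:ℝ)) (g := fun ξ => (G ξ) ^ 2)
    rw [step, p1, p2, p3]
    have v1 : (∫ z : Fin n → ℝ, (F z) ^ 2 ∂(Measure.pi fun _ : Fin n => μ0))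
        = (∑ j, (c j) ^ 2) * (((k:ℝ)/n) * (γ:ℝ) ^ 2) := by
      rw [hF', sum_sq_integral μ0 hμi1 hμi2 hμm1 c, hμm2]
    have v2 : (∫ _ξ : Fin n → ℝ, (1:ℝ) ∂(Measure.pi fun _ : Fin n => ν0)) = 1 := by
      simp
    have v3 : (∫ z : Fin n → ℝ, 2 * F z ∂(Measure.pi fun _ : Fin n => μ0)) = 0 := by
      rw [MeasureTheory.integral_const_mul, hF', sum_integral μ0 hμi1 hμm1 c, mul_zero]
    have v4 : (∫ ξ : Fin n → ℝ, G ξ ∂(Measure.pi fun _ : Fin n => ν0)) = 0 := by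
      rw [hG', sum_integral ν0 hνi1 hνm1 wt]
    have v5 : (∫ _z : Fin n → ℝ, (1:ℝ) ∂(Measure.pi fun _ : Fin n => μ0)) = 1 := by
      simp
    have v6 : (∫ ξ : Fin n → ℝ, (G ξ) ^ 2 ∂(Measure.pi fun _ : Fin n => ν0))
        = (∑ i, (wt i) ^ 2) * (σ:ℝ) ^ 2 := by
      rw [hG', sum_sq_integral ν0 hνi1 hνi2 hνm1 wt, hνm2]
    rw [v1, v2, v3, v4, v5, v6]
    ring
  rw [hint_eq]
  -- orthogonality
  have horth : ∑ i, (wt i) ^ 2 = ∑ j, (v j) ^ 2 := by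
    have hAA : A * Aᵀ = 1 := by rwa [mul_eq_one_comm] at hA
    have hAAe : ∀ i i', (∑ j, A i j * A i' j) = if i = i' then 1 else 0 := by
      intro i i'
      have := congrFun (congrFun hAA i) i'
      simpa [Matrix.mul_apply, Matrix.transpose_apply, Matrix.one_apply] using this
    have e1 : ∀ j : Fin n, (v j) ^ 2 = ∑ i, ∑ i', (wt i * wt i') * (A i j * A i' j) := by
      intro j
      rw [hv, pow_two, Finset.sum_mul_sum]
      exact Finset.sum_congr rfl fun i _ => Finset.sum_congr rfl fun i' _ => by ring
    calc ∑ i, (wt i) ^ 2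
        = ∑ i, ∑ i', (wt i * wt i') * (if i = i' then 1 else 0) := by
          refine Finset.sum_congr rfl fun i _ => ?_
          rw [Finset.sum_eq_single i]
          · rw [if_pos rfl, mul_one, pow_two]
          · intro b _ hb
            rw [if_neg (Ne.symm hb), mul_zero]
          · intro h; exact absurd (Finset.mem_univ i) h
      _ = ∑ i, ∑ i', (wt i * wt i') * (∑ j, A i j * A i' j) := by
          simp_rw [hAAe]
      _ = ∑ i, ∑ i', ∑ j, (wt i * wt i') * (A i j * A i' j) := by
          simp_rw [Finset.mul_sum]
      _ = ∑ i, ∑ j, ∑ i', (wt i * wt i') * (A i j * A i' j) := by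
          refine Finset.sum_congr rfl fun i _ => Finset.sum_comm
      _ = ∑ j, ∑ i, ∑ i', (wt i * wt i') * (A i j * A i' j) := Finset.sum_comm
      _ = ∑ j, (v j) ^ 2 := by
          refine Finset.sum_congr rfl fun j _ => (e1 j).symm
  rw [horth]
  -- final algebra
  set a : ℝ := (γ:ℝ) ^ 2 * ((k:ℝ) / n) with ha
  set b : ℝ := (σ:ℝ) ^ 2 with hb
  have ha0 : 0 ≤ a := by positivity
  have hb0 : 0 ≤ b := by positivity
  have hsum_eq : (∑ j, (c j) ^ 2) * (((k:ℝ)/n) * (γ:ℝ) ^ 2) + (∑ j, (v j) ^ 2) * (σ:ℝ) ^ 2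
      = ∑ j, ((v j - w j) ^ 2 * a + (v j) ^ 2 * b) := by
    rw [Finset.sum_add_distrib, ← Finset.sum_mul, ← Finset.sum_mul, ha, hb]
    ring
  rw [hsum_eq]
  by_cases hab : a + b = 0
  · have ha' : a = 0 := by linarith
    have hb' : b = 0 := by linarith
    rw [ha', hb']
    simp
  · have hab' : 0 < a + b := lt_of_le_of_ne (by linarith) (Ne.symm hab)
    have hLHS : (γ:ℝ) ^ 2 * (k:ℝ) * b / (a + b)
        = ∑ _j : Fin n, a * b / (a + b) := by
      rw [Finset.sum_const, Finset.card_univ, Fintype.card_fin, nsmul_eq_mul]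
      rw [mul_div_assoc']
      congr 1
      rw [ha]
      field_simp
    rw [hLHS]
    refine Finset.sum_le_sum fun j _ => ?_
    have hwsq : (w j) ^ 2 = 1 := by
      rcases hw j with h | h <;> rw [h] <;> norm_num
    rw [div_le_iff₀ hab']
    have hprod : a * b * ((w j) ^ 2 - 1) = 0 := by rw [hwsq]; ring
    nlinarith [sq_nonneg (a * (v j - w j) + b * v j), hprod]
end

section
/- (Performance of soft-thresholding for sparse recovery) Let A be an n×m matrix with ‖AᵀA − I‖_∞ ≤ μ and columns of ℓ₂-norm² at most 1+μ. Let z ∈ ℝ^m with ‖z‖₁ ≤ M and |supp(z)| ≤ k, and let x = Az + ξ with ξ ~ N(0, σ²I_n). Then there is τ = Θ(σ√((1+μ)log m) + μM) such that with high probability the estimate ẑ = ρ_τ^{⊗m}(Aᵀx) (coordinatewise soft thresholding) satisfies ‖ẑ − z‖_∞ ≤ 2τ and supp(ẑ) ⊆ supp(z). -/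
open Matrix MeasureTheory ProbabilityTheory NNReal
open Real

lemma lintegral_exp_gaussian (v : ℝ≥0) (a : ℝ) :
    ∫⁻ x, ENNReal.ofReal (Real.exp (a * x)) ∂(gaussianReal 0 v)
      = ENNReal.ofReal (Real.exp ((v : ℝ) * a ^ 2 / 2)) := by
  rcases eq_or_ne v 0 with hv | hv
  · subst hv
    simp [gaussianReal_zero_var, lintegral_dirac]
  · have hv' : 0 < (v : ℝ) := by positivity
    have hb : 0 < (2 * (v : ℝ))⁻¹ := by positivity
    have hsqrt : 0 < Real.sqrt (2 * π * v) := by positivity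
    rw [gaussianReal_of_var_ne_zero 0 hv]
    rw [lintegral_withDensity_eq_lintegral_mul _ (measurable_gaussianPDF 0 v)
      (by exact (Real.measurable_exp.comp (measurable_const.mul measurable_id)).ennreal_ofReal)]
    have hpt : ∀ x : ℝ, (gaussianPDF 0 v * fun x => ENNReal.ofReal (Real.exp (a * x))) x
        = ENNReal.ofReal (gaussianPDFReal 0 v x * Real.exp (a * x)) := by
      intro x
      simp only [Pi.mul_apply, gaussianPDF_def]
      rw [ENNReal.ofReal_mul (gaussianPDFReal_nonneg 0 v x)]
    simp_rw [hpt]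
    have heq : ∀ x : ℝ, gaussianPDFReal 0 v x * Real.exp (a * x)
        = (Real.sqrt (2 * π * v))⁻¹ * Real.exp ((v : ℝ) * a ^ 2 / 2)
          * Real.exp (-((2 * (v : ℝ))⁻¹) * (x - a * v) ^ 2) := by
      intro x
      rw [gaussianPDFReal_def]
      simp only [sub_zero]
      have h3 : rexp (-x ^ 2 / (2 * (v:ℝ))) * rexp (a * x)
          = rexp ((v:ℝ) * a ^ 2 / 2) * rexp (-((2 * (v:ℝ))⁻¹) * (x - a * v) ^ 2) := by
        rw [← Real.exp_add, ← Real.exp_add]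
        congr 1
        field_simp
        ring
      rw [mul_assoc, h3, ← mul_assoc]
    simp_rw [heq]
    have hint0 : Integrable (fun x : ℝ => Real.exp (-((2 * (v : ℝ))⁻¹) * x ^ 2)) :=
      integrable_exp_neg_mul_sq hb
    have hint1 : Integrable (fun x : ℝ => Real.exp (-((2 * (v : ℝ))⁻¹) * (x - a * v) ^ 2)) :=
      hint0.comp_sub_right (a * v)
    have hint : Integrable (fun x : ℝ => (Real.sqrt (2 * π * v))⁻¹
        * Real.exp ((v : ℝ) * a ^ 2 / 2)
        * Real.exp (-((2 * (v : ℝ))⁻¹) * (x - a * v) ^ 2)) := hint1.const_mul _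
    rw [← ofReal_integral_eq_lintegral_ofReal hint (Filter.Eventually.of_forall fun x => by positivity)]
    congr 1
    rw [MeasureTheory.integral_const_mul]
    rw [integral_sub_right_eq_self (fun x : ℝ => Real.exp (-((2 * (v : ℝ))⁻¹) * x ^ 2)) (a * v)]
    rw [integral_gaussian]
    have : π / (2 * (v : ℝ))⁻¹ = 2 * π * v := by field_simp
    rw [this]
    rw [mul_comm ((Real.sqrt (2 * π * v))⁻¹) _, mul_assoc, inv_mul_cancel₀ (ne_of_gt hsqrt), mul_one]

lemma lintegral_pi_prod : ∀ (n : ℕ) (μ : Measure ℝ), SigmaFinite μ →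
    ∀ (f : Fin n → ℝ → ENNReal), (∀ j, Measurable (f j)) →
    ∫⁻ ξ : Fin n → ℝ, ∏ j, f j (ξ j) ∂(Measure.pi fun _ => μ) = ∏ j, ∫⁻ x, f j x ∂μ := by
  intro n
  induction n with
  | zero =>
    intro μ hσ f hf
    simp only [Finset.univ_eq_empty, Finset.prod_empty]
    rw [lintegral_one]
    have : (Measure.pi fun _ : Fin 0 => μ) Set.univ = ∏ _i : Fin 0, μ Set.univ := by
      rw [← Measure.pi_pi]
      exact congrArg _ (Set.pi_univ _).symm
    simp [this]
  | succ n ih =>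
    intro μ hσ f hf
    have hmp := measurePreserving_piFinSuccAbove (fun _ : Fin (n + 1) => μ) 0
    have hGmeas : Measurable (fun p : ℝ × (Fin n → ℝ) =>
        f 0 p.1 * ∏ j : Fin n, f j.succ (p.2 j)) := by
      apply Measurable.mul
      · exact (hf 0).comp measurable_fst
      · exact Finset.measurable_prod _ fun j _ =>
          (hf j.succ).comp ((measurable_pi_apply j).comp measurable_snd)
    have key : ∀ ξ : Fin (n + 1) → ℝ, (∏ j, f j (ξ j)) =
        (fun p : ℝ × (Fin n → ℝ) => f 0 p.1 * ∏ j : Fin n, f j.succ (p.2 j))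
          (MeasurableEquiv.piFinSuccAbove (fun _ : Fin (n + 1) => ℝ) 0 ξ) := by
      intro ξ
      rw [Fin.prod_univ_succ]
      simp [MeasurableEquiv.piFinSuccAbove_apply, Fin.zero_succAbove, Fin.tail]
    simp_rw [key]
    rw [hmp.lintegral_comp hGmeas]
    have h2 : AEMeasurable (fun b : Fin n → ℝ => ∏ j : Fin n, f j.succ (b j))
        (Measure.pi fun _ => μ) := by
      exact (Finset.measurable_prod Finset.univ fun j _ =>
        (hf j.succ).comp (measurable_pi_apply j)).aemeasurable
    refine (lintegral_prod_mul (f := f 0) (g := fun b : Fin n → ℝ => ∏ j : Fin n, f j.succ (b j))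
      ((hf 0).aemeasurable) h2).trans ?_
    rw [ih μ hσ (fun j => f j.succ) (fun j => hf j.succ)]
    rw [Fin.prod_univ_succ]
lemma chernoff_pi {n : ℕ} (v : ℝ≥0) (c : Fin n → ℝ) {s t : ℝ} (hs : 0 ≤ s) :
    (Measure.pi fun _ : Fin n => gaussianReal 0 v) {ξ | t ≤ ∑ j, c j * ξ j}
      ≤ ENNReal.ofReal (Real.exp ((v : ℝ) * s ^ 2 * (∑ j, (c j) ^ 2) / 2 - s * t)) := by
  set μpi := Measure.pi fun _ : Fin n => gaussianReal 0 v
  set F : (Fin n → ℝ) → ENNReal := fun ξ => ENNReal.ofReal (Real.exp (s * ∑ j, c j * ξ j))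
    with hF
  have hXmeas : Measurable fun ξ : Fin n → ℝ => ∑ j, c j * ξ j :=
    Finset.measurable_sum _ fun j _ => measurable_const.mul (measurable_pi_apply j)
  have hFmeas : Measurable F :=
    (Real.measurable_exp.comp (hXmeas.const_mul s)).ennreal_ofReal
  -- step 1 : Markov
  have h1 : ENNReal.ofReal (Real.exp (s * t)) * μpi {ξ | t ≤ ∑ j, c j * ξ j}
      ≤ ∫⁻ ξ, F ξ ∂μpi := by
    refine le_trans ?_ (mul_meas_ge_le_lintegral₀ hFmeas.aemeasurable
      (ENNReal.ofReal (Real.exp (s * t))))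
    refine mul_le_mul_right (measure_mono fun ξ hξ => ?_) _
    have : s * t ≤ s * ∑ j, c j * ξ j := mul_le_mul_of_nonneg_left hξ hs
    exact ENNReal.ofReal_le_ofReal (Real.exp_le_exp.mpr this)
  -- step 2 : compute the lintegral
  have h2 : ∫⁻ ξ, F ξ ∂μpi
      = ENNReal.ofReal (Real.exp ((v : ℝ) * s ^ 2 * (∑ j, (c j) ^ 2) / 2)) := by
    have hFeq : ∀ ξ : Fin n → ℝ, F ξ = ∏ j, ENNReal.ofReal (Real.exp (s * c j * ξ j)) := by
      intro ξ
      rw [hF]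
      simp only
      rw [Finset.mul_sum, Real.exp_sum, ENNReal.ofReal_prod_of_nonneg
        (fun j _ => (Real.exp_pos _).le)]
      congr 1 with j
      ring_nf
    simp_rw [hFeq]
    rw [lintegral_pi_prod n (gaussianReal 0 v) inferInstance
      (fun j x => ENNReal.ofReal (Real.exp (s * c j * x)))
      (fun j => (Real.measurable_exp.comp (measurable_const.mul measurable_id)).ennreal_ofReal)]
    have : ∀ j : Fin n, ∫⁻ x, ENNReal.ofReal (Real.exp (s * c j * x)) ∂(gaussianReal 0 v)
        = ENNReal.ofReal (Real.exp ((v : ℝ) * (s * c j) ^ 2 / 2)) :=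
      fun j => lintegral_exp_gaussian v (s * c j)
    simp_rw [this]
    rw [← ENNReal.ofReal_prod_of_nonneg (fun j _ => (Real.exp_pos _).le), ← Real.exp_sum]
    congr 2
    rw [Finset.mul_sum, ← Finset.sum_div]
    congr 1
    exact Finset.sum_congr rfl fun j _ => by ring
  -- conclude
  have hεpos : 0 < Real.exp (s * t) := Real.exp_pos _
  have hε0 : ENNReal.ofReal (Real.exp (s * t)) ≠ 0 := by
    simp [ENNReal.ofReal_eq_zero, not_le, hεpos]
  have hεtop : ENNReal.ofReal (Real.exp (s * t)) ≠ ⊤ := ENNReal.ofReal_ne_top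
  have h3 : μpi {ξ | t ≤ ∑ j, c j * ξ j}
      ≤ ENNReal.ofReal (Real.exp ((v : ℝ) * s ^ 2 * (∑ j, (c j) ^ 2) / 2))
        / ENNReal.ofReal (Real.exp (s * t)) := by
    rw [ENNReal.le_div_iff_mul_le (Or.inl hε0) (Or.inl hεtop), mul_comm]
    exact h1.trans_eq h2
  refine h3.trans ?_
  rw [← ENNReal.ofReal_div_of_pos hεpos, ← Real.exp_sub]

lemma soft_aux {y z τ : ℝ} (hτ : 0 ≤ τ) (h : |y - z| ≤ τ) :
    |Real.sign y * max 0 (|y| - τ) - z| ≤ 2 * τ ∧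
      (z = 0 → Real.sign y * max 0 (|y| - τ) = 0) := by
  have key : |Real.sign y * max 0 (|y| - τ) - y| ≤ τ := by
    rcases lt_trichotomy y 0 with hy | hy | hy
    · rw [Real.sign_of_neg hy, abs_of_neg hy]
      rcases le_or_gt (-y) τ with h1 | h1
      · rw [max_eq_left (by linarith)]
        rw [mul_zero, zero_sub, abs_neg, abs_of_neg hy]
        linarith
      · rw [max_eq_right (by linarith)]
        have : (-1 : ℝ) * (-y - τ) - y = τ := by ring
        rw [this, abs_of_nonneg hτ]
    · subst hy
      simp [hτ]
    · rw [Real.sign_of_pos hy, abs_of_pos hy]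
      rcases le_or_gt y τ with h1 | h1
      · rw [max_eq_left (by linarith : y - τ ≤ 0), mul_zero, zero_sub, abs_neg, abs_of_pos hy]
        linarith
      · rw [max_eq_right (by linarith)]
        have : (1 : ℝ) * (y - τ) - y = -τ := by ring
        rw [this, abs_neg, abs_of_nonneg hτ]
  constructor
  · calc |Real.sign y * max 0 (|y| - τ) - z|
        ≤ |Real.sign y * max 0 (|y| - τ) - y| + |y - z| := abs_sub_le _ _ _
      _ ≤ τ + τ := add_le_add key h
      _ = 2 * τ := by ring
  · intro hz
    subst hz
    rw [sub_zero] at h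
    rw [max_eq_left (by linarith), mul_zero]

open Matrix

lemma exp_bound (a b c S : ℝ) (ha : 0 < a) (hb : 0 < b) (hc : 0 ≤ c) (hS : S ≤ b) :
    a ^ 2 * (3 * a * Real.sqrt (b * c) / (a ^ 2 * b)) ^ 2 * S / 2
      - 3 * a * Real.sqrt (b * c) / (a ^ 2 * b) * (3 * a * Real.sqrt (b * c))
      ≤ -(3 * c) := by
  have hr2 : Real.sqrt (b * c) ^ 2 = b * c := Real.sq_sqrt (by positivity)
  set r := Real.sqrt (b * c) with hr
  have e1 : a ^ 2 * (3 * a * r / (a ^ 2 * b)) ^ 2 * S / 2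
      ≤ a ^ 2 * (3 * a * r / (a ^ 2 * b)) ^ 2 * b / 2 := by
    nlinarith [sq_nonneg (3 * a * r / (a ^ 2 * b)), sq_nonneg a,
      mul_nonneg (sq_nonneg a) (sq_nonneg (3 * a * r / (a ^ 2 * b)))]
  have e2 : a ^ 2 * (3 * a * r / (a ^ 2 * b)) ^ 2 * b / 2
      - 3 * a * r / (a ^ 2 * b) * (3 * a * r) = -(9 / 2 * c) := by
    have ha2 : (3 * a * r) ^ 2 = 9 * a ^ 2 * (b * c) := by
      rw [mul_pow, hr2]
      ring
    have step : a ^ 2 * (3 * a * r / (a ^ 2 * b)) ^ 2 * b / 2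
        - 3 * a * r / (a ^ 2 * b) * (3 * a * r)
        = -((3 * a * r) ^ 2 / (2 * (a ^ 2 * b))) := by
      field_simp
      ring
    rw [step, ha2]
    field_simp
  linarith


/-- Performance of coordinatewise soft thresholding for sparse recovery: there is a
universal constant `C > 0` such that for any `μ`-incoherent `A` with column norms²
at most `1+μ`, any `k`-sparse `z` with `‖z‖₁ ≤ M`, and `x = Az + ξ` with
`ξ ~ N(0, σ²Iₙ)`, taking `τ = C(σ√((1+μ) log m) + μM)`, with probability at least
`1 − 1/m` the soft-threshold estimate `ẑ = ρ_τ^{⊗m}(Aᵀx)` satisfies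
`‖ẑ − z‖_∞ ≤ 2τ` and `supp(ẑ) ⊆ supp(z)`. -/
theorem soft_threshold_recovery :
    ∃ C : ℝ, 0 < C ∧
      ∀ (n m k : ℕ) (A : Matrix (Fin n) (Fin m) ℝ) (μ M : ℝ) (σ : ℝ≥0),
        0 ≤ μ →
        (∀ i j, |(Aᵀ * A - 1 : Matrix (Fin m) (Fin m) ℝ) i j| ≤ μ) →
        (∀ j, ∑ i, (A i j) ^ 2 ≤ 1 + μ) →
        ∀ z : Fin m → ℝ, (∑ j, |z j|) ≤ M →
          (Finset.univ.filter fun j => z j ≠ 0).card ≤ k →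
          ENNReal.ofReal (1 - 1 / (m : ℝ)) ≤
            (Measure.pi fun _ : Fin n => gaussianReal 0 (σ ^ 2))
              {ξ : Fin n → ℝ | ∀ i : Fin m,
                |Real.sign (Aᵀ.mulVec (A.mulVec z + ξ) i) *
                    max 0 (|Aᵀ.mulVec (A.mulVec z + ξ) i| -
                      C * ((σ : ℝ) * Real.sqrt ((1 + μ) * Real.log m) + μ * M)) - z i| ≤
                  2 * (C * ((σ : ℝ) * Real.sqrt ((1 + μ) * Real.log m) + μ * M)) ∧
                (z i = 0 →
                  Real.sign (Aᵀ.mulVec (A.mulVec z + ξ) i) *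
                    max 0 (|Aᵀ.mulVec (A.mulVec z + ξ) i| -
                      C * ((σ : ℝ) * Real.sqrt ((1 + μ) * Real.log m) + μ * M)) = 0)} := by
  refine ⟨3, by norm_num, ?_⟩
  intro n m k A μ M σ hμ hinc hcol z hM hk
  set μpi := (Measure.pi fun _ : Fin n => gaussianReal 0 (σ ^ 2)) with hμpi
  have hM0 : 0 ≤ M := le_trans (Finset.sum_nonneg fun j _ => abs_nonneg _) hM
  have h1μ : (0:ℝ) < 1 + μ := by linarith
  set sq := Real.sqrt ((1 + μ) * Real.log m) with hsqdef
  have hsq0 : 0 ≤ sq := Real.sqrt_nonneg _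
  set t := 3 * (σ : ℝ) * sq with htdef
  have ht0 : 0 ≤ t := by positivity
  have hτ0 : (0:ℝ) ≤ 3 * ((σ : ℝ) * sq + μ * M) := by positivity
  set X : Fin m → (Fin n → ℝ) → ℝ := fun i ξ => ∑ j, A j i * ξ j with hXdef
  have hXmeas : ∀ i, Measurable (X i) := fun i =>
    Finset.measurable_sum _ fun j _ => measurable_const.mul (measurable_pi_apply j)
  set G := {ξ : Fin n → ℝ | ∀ i, |X i ξ| ≤ t} with hGdef
  have hGmeas : MeasurableSet G := by
    have : G = ⋂ i, {ξ : Fin n → ℝ | |X i ξ| ≤ t} := by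
      ext ξ; simp [hGdef, Set.mem_iInter]
    rw [this]
    exact MeasurableSet.iInter fun i =>
      measurableSet_le (measurable_abs.comp (hXmeas i)) measurable_const
  -- the good event implies the conclusion
  have hyi : ∀ (ξ : Fin n → ℝ) (i : Fin m),
      Aᵀ.mulVec (A.mulVec z + ξ) i = (Aᵀ * A).mulVec z i + X i ξ := by
    intro ξ i
    rw [Matrix.mulVec_add, Pi.add_apply, Matrix.mulVec_mulVec]
    congr 1
  have hbias : ∀ i, |(Aᵀ * A).mulVec z i - z i| ≤ μ * M := by
    intro i
    have h0 : (Aᵀ * A).mulVec z i - z i = ((Aᵀ * A - 1).mulVec z) i := by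
      rw [Matrix.sub_mulVec, Matrix.one_mulVec, Pi.sub_apply]
    have h1 : ((Aᵀ * A - 1).mulVec z) i
        = ∑ j, (Aᵀ * A - 1 : Matrix (Fin m) (Fin m) ℝ) i j * z j := by
      simp [Matrix.mulVec, dotProduct]
    rw [h0, h1]
    calc |∑ j, (Aᵀ * A - 1 : Matrix (Fin m) (Fin m) ℝ) i j * z j|
          ≤ ∑ j, |(Aᵀ * A - 1 : Matrix (Fin m) (Fin m) ℝ) i j * z j| :=
          Finset.abs_sum_le_sum_abs _ _
      _ ≤ ∑ j, μ * |z j| := Finset.sum_le_sum fun j _ => by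
          rw [abs_mul]
          exact mul_le_mul_of_nonneg_right (hinc i j) (abs_nonneg _)
      _ = μ * ∑ j, |z j| := (Finset.mul_sum _ _ _).symm
      _ ≤ μ * M := mul_le_mul_of_nonneg_left hM hμ
  have hsub : G ⊆ {ξ : Fin n → ℝ | ∀ i : Fin m,
      |Real.sign (Aᵀ.mulVec (A.mulVec z + ξ) i) *
          max 0 (|Aᵀ.mulVec (A.mulVec z + ξ) i| -
            3 * ((σ : ℝ) * sq + μ * M)) - z i| ≤
        2 * (3 * ((σ : ℝ) * sq + μ * M)) ∧
      (z i = 0 →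
        Real.sign (Aᵀ.mulVec (A.mulVec z + ξ) i) *
          max 0 (|Aᵀ.mulVec (A.mulVec z + ξ) i| -
            3 * ((σ : ℝ) * sq + μ * M)) = 0)} := by
    intro ξ hξ i
    have hdev : |Aᵀ.mulVec (A.mulVec z + ξ) i - z i| ≤ 3 * ((σ : ℝ) * sq + μ * M) := by
      rw [hyi ξ i]
      have h2 : (Aᵀ * A).mulVec z i + X i ξ - z i
          = ((Aᵀ * A).mulVec z i - z i) + X i ξ := by ring
      rw [h2]
      calc |((Aᵀ * A).mulVec z i - z i) + X i ξ|
          ≤ |(Aᵀ * A).mulVec z i - z i| + |X i ξ| := abs_add_le _ _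
        _ ≤ μ * M + t := add_le_add (hbias i) (hξ i)
        _ ≤ 3 * ((σ : ℝ) * sq + μ * M) := by
            rw [htdef]
            nlinarith [mul_nonneg hμ hM0]
    exact soft_aux hτ0 hdev
  refine le_trans ?_ (measure_mono hsub)
  -- reduce to bounding the probability of the good event
  rcases lt_or_ge m 2 with hm | hm
  · rcases (by omega : m = 0 ∨ m = 1) with h0 | h1
    · have huniv : G = Set.univ := Set.eq_univ_of_forall fun ξ i => absurd i.isLt (by omega)
      rw [huniv, measure_univ, h0]
      simp
    · rw [h1]
      simp
  · have hm1 : (1:ℝ) ≤ (m:ℝ) := by exact_mod_cast Nat.one_le_of_lt hm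
    have hm0 : (0:ℝ) < (m:ℝ) := by linarith
    have hm2 : (2:ℝ) ≤ (m:ℝ) := by exact_mod_cast hm
    have hlogm : 0 ≤ Real.log m := Real.log_nonneg hm1
    rcases eq_or_ne σ 0 with hσ | hσ
    · -- degenerate noiseless case
      subst hσ
      have hB : μpi (Set.pi Set.univ fun _ : Fin n => ({0} : Set ℝ)) = 1 := by
        rw [hμpi]
        rw [Measure.pi_pi]
        have : ∀ _j : Fin n, (gaussianReal 0 ((0:ℝ≥0) ^ 2)) ({0} : Set ℝ) = 1 := by
          intro j
          have : ((0:ℝ≥0) ^ 2) = 0 := by norm_num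
          rw [this, gaussianReal_zero_var]
          exact Measure.dirac_apply_of_mem rfl
        simp [this]
      have hBG : (Set.pi Set.univ fun _ : Fin n => ({0} : Set ℝ)) ⊆ G := by
        intro ξ hξ i
        have hz : ∀ j, ξ j = 0 := fun j => hξ j (Set.mem_univ j)
        have : X i ξ = 0 := by
          simp [hXdef, hz]
        rw [this, abs_zero]
        exact ht0
      calc ENNReal.ofReal (1 - 1 / (m:ℝ)) ≤ 1 := ENNReal.ofReal_le_one.mpr (by
            have : 0 < 1 / (m:ℝ) := by positivity
            linarith)
        _ = μpi (Set.pi Set.univ fun _ : Fin n => ({0} : Set ℝ)) := hB.symm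
        _ ≤ μpi G := measure_mono hBG
    · -- main case : Chernoff bound
      have hσ' : (0:ℝ) < (σ:ℝ) := by
        exact_mod_cast zero_lt_iff.mpr hσ
      have hs0 : 0 ≤ t / ((σ:ℝ) ^ 2 * (1 + μ)) := by positivity
      have hcast : ∀ i : Fin m, ((σ ^ 2 : ℝ≥0) : ℝ) * (t / ((σ:ℝ) ^ 2 * (1 + μ))) ^ 2
            * (∑ j, (A j i) ^ 2) / 2 - (t / ((σ:ℝ) ^ 2 * (1 + μ))) * t
          ≤ -(3 * Real.log m) := by
        intro i
        have hc : ((σ ^ 2 : ℝ≥0) : ℝ) = (σ:ℝ) ^ 2 := by push_cast; ring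
        rw [hc, htdef, hsqdef]
        exact exp_bound (σ:ℝ) (1 + μ) (Real.log m) _ hσ' h1μ hlogm (hcol i)
      have hexp3 : Real.exp (-(3 * Real.log m)) = (((m:ℝ) ^ 3)⁻¹ : ℝ) := by
        have h4 : (3:ℝ) * Real.log m = Real.log ((m:ℝ) ^ 3) := by
          rw [Real.log_pow]
          push_cast
          ring
        rw [Real.exp_neg, h4, Real.exp_log (by positivity)]
      -- tail bounds for each coordinate
      have htail : ∀ i : Fin m, μpi {ξ | ¬ |X i ξ| ≤ t}
          ≤ ENNReal.ofReal (2 * ((m:ℝ) ^ 3)⁻¹) := by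
        intro i
        have hA : μpi {ξ | t ≤ X i ξ} ≤ ENNReal.ofReal (((m:ℝ) ^ 3)⁻¹) := by
          refine le_trans (chernoff_pi (σ ^ 2) (fun j => A j i) hs0) ?_
          rw [← hexp3]
          exact ENNReal.ofReal_le_ofReal (Real.exp_le_exp.mpr (hcast i))
        have hB2 : μpi {ξ | t ≤ -X i ξ} ≤ ENNReal.ofReal (((m:ℝ) ^ 3)⁻¹) := by
          have hset : {ξ : Fin n → ℝ | t ≤ ∑ j, (fun j => -A j i) j * ξ j}
              = {ξ : Fin n → ℝ | t ≤ -X i ξ} := by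
            ext ξ
            simp [hXdef, neg_mul, Finset.sum_neg_distrib]
          refine le_trans (le_of_eq (congrArg _ hset.symm)) ?_
          refine le_trans (chernoff_pi (σ ^ 2) (fun j => -A j i) hs0) ?_
          rw [← hexp3]
          refine ENNReal.ofReal_le_ofReal (Real.exp_le_exp.mpr ?_)
          have : ∑ j, ((fun j => -A j i) j) ^ 2 = ∑ j, (A j i) ^ 2 := by
            simp [neg_sq]
          rw [this]
          exact hcast i
        have hsplit : {ξ : Fin n → ℝ | ¬ |X i ξ| ≤ t}
            ⊆ {ξ | t ≤ X i ξ} ∪ {ξ | t ≤ -X i ξ} := by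
          intro ξ hξ
          rw [Set.mem_setOf_eq, not_le, lt_abs] at hξ
          rcases hξ with h | h
          · exact Or.inl h.le
          · exact Or.inr (by simpa using h.le)
        calc μpi {ξ | ¬ |X i ξ| ≤ t} ≤ μpi ({ξ | t ≤ X i ξ} ∪ {ξ | t ≤ -X i ξ}) :=
              measure_mono hsplit
          _ ≤ μpi {ξ | t ≤ X i ξ} + μpi {ξ | t ≤ -X i ξ} := measure_union_le _ _
          _ ≤ ENNReal.ofReal (((m:ℝ) ^ 3)⁻¹) + ENNReal.ofReal (((m:ℝ) ^ 3)⁻¹) :=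
              add_le_add hA hB2
          _ = ENNReal.ofReal (2 * ((m:ℝ) ^ 3)⁻¹) := by
              rw [← ENNReal.ofReal_add (by positivity) (by positivity)]
              congr 1
              ring
      -- union bound
      have hcompl : μpi Gᶜ ≤ ENNReal.ofReal (1 / (m:ℝ)) := by
        have hGc : Gᶜ ⊆ ⋃ i : Fin m, {ξ : Fin n → ℝ | ¬ |X i ξ| ≤ t} := by
          intro ξ hξ
          rw [Set.mem_compl_iff, hGdef, Set.mem_setOf_eq, not_forall] at hξ
          obtain ⟨i, hi⟩ := hξ
          exact Set.mem_iUnion.mpr ⟨i, hi⟩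
        calc μpi Gᶜ ≤ μpi (⋃ i : Fin m, {ξ : Fin n → ℝ | ¬ |X i ξ| ≤ t}) := measure_mono hGc
          _ ≤ ∑' (i : Fin m), μpi {ξ : Fin n → ℝ | ¬ |X i ξ| ≤ t} := measure_iUnion_le _
          _ = ∑ i : Fin m, μpi {ξ : Fin n → ℝ | ¬ |X i ξ| ≤ t} := tsum_fintype _
          _ ≤ ∑ i : Fin m, ENNReal.ofReal (2 * ((m:ℝ) ^ 3)⁻¹) :=
              Finset.sum_le_sum fun i _ => htail i
          _ = (m : ENNReal) * ENNReal.ofReal (2 * ((m:ℝ) ^ 3)⁻¹) := by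
              rw [Finset.sum_const, Finset.card_univ, Fintype.card_fin, nsmul_eq_mul]
          _ = ENNReal.ofReal ((m:ℝ) * (2 * ((m:ℝ) ^ 3)⁻¹)) := by
              rw [← ENNReal.ofReal_natCast m, ← ENNReal.ofReal_mul (by positivity)]
          _ ≤ ENNReal.ofReal (1 / (m:ℝ)) := by
              refine ENNReal.ofReal_le_ofReal ?_
              have h5 : (m:ℝ) * (2 * ((m:ℝ) ^ 3)⁻¹) = 2 / (m:ℝ) ^ 2 := by
                field_simp
              rw [h5, div_le_div_iff₀ (by positivity) (by positivity)]
              nlinarith [hm2, hm0]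
      have hfinal : ENNReal.ofReal (1 - 1 / (m:ℝ)) = 1 - ENNReal.ofReal (1 / (m:ℝ)) := by
        rw [ENNReal.ofReal_sub _ (by positivity), ENNReal.ofReal_one]
      rw [hfinal]
      have hprob : μpi G = 1 - μpi Gᶜ := by
        have := prob_compl_eq_one_sub (μ := μpi) hGmeas.compl
        rw [compl_compl] at this
        exact this
      rw [hprob]
      exact tsub_le_tsub_left hcompl 1
end

section
/- (ReLU network prediction error) Under the assumptions of the soft-thresholding lemma, with w ∈ ℝ^m satisfying ‖w‖_∞ = 1 and Y = ⟨w, z⟩, the estimator Ŷ = ⟨w, ρ_τ^{⊗m}(Aᵀx)⟩ satisfies, with high probability, (Ŷ − Y)² ≤ k²·‖ẑ − z‖_∞² = O(k²((1+μ)σ²log m + μ²M²)). -/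
open Matrix MeasureTheory ProbabilityTheory NNReal

open scoped ENNReal

section Aux

lemma exp_mul_gaussianPDFReal' (v : ℝ≥0) (hv : v ≠ 0) (t x : ℝ) :
    Real.exp (t * x) * gaussianPDFReal 0 v x
      = Real.exp ((v : ℝ) * t ^ 2 / 2) * gaussianPDFReal ((v : ℝ) * t) v x := by
  have hv' : (v : ℝ) ≠ 0 := by exact_mod_cast hv
  simp only [gaussianPDFReal_def]
  rw [mul_left_comm, mul_left_comm (Real.exp _)]
  congr 1
  rw [← Real.exp_add, ← Real.exp_add]
  congr 1
  field_simp
  ring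

lemma gaussianPDF_eq_coe_toNNReal' (v : ℝ≥0) :
    gaussianPDF 0 v = fun x => (((gaussianPDFReal 0 v x).toNNReal : ℝ≥0) : ℝ≥0∞) := by
  funext x; rw [gaussianPDF_def]; rfl

lemma integral_exp_gaussianReal' (v : ℝ≥0) (t : ℝ) :
    ∫ x, Real.exp (t * x) ∂(gaussianReal 0 v) = Real.exp ((v : ℝ) * t ^ 2 / 2) := by
  rcases eq_or_ne v 0 with rfl | hv
  · simp [gaussianReal_zero_var]
  · rw [gaussianReal_of_var_ne_zero _ hv]
    have hmeas : Measurable fun x => (gaussianPDFReal 0 v x).toNNReal :=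
      (measurable_gaussianPDFReal 0 v).real_toNNReal
    rw [gaussianPDF_eq_coe_toNNReal', integral_withDensity_eq_integral_smul hmeas]
    have : ∀ x, ((gaussianPDFReal 0 v x).toNNReal : ℝ≥0) • Real.exp (t * x)
        = Real.exp ((v : ℝ) * t ^ 2 / 2) * gaussianPDFReal ((v : ℝ) * t) v x := by
      intro x
      rw [NNReal.smul_def, smul_eq_mul, Real.coe_toNNReal _ (gaussianPDFReal_nonneg 0 v x),
        mul_comm]
      exact exp_mul_gaussianPDFReal' v hv t x
    simp only [this]
    rw [integral_const_mul, integral_gaussianPDFReal_eq_one _ hv, mul_one]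

lemma integrable_exp_gaussianReal' (v : ℝ≥0) (t : ℝ) :
    Integrable (fun x => Real.exp (t * x)) (gaussianReal 0 v) := by
  rcases eq_or_ne v 0 with rfl | hv
  · rw [gaussianReal_zero_var]
    exact (integrable_const _).congr (MeasureTheory.ae_eq_dirac _).symm
  · rw [gaussianReal_of_var_ne_zero _ hv]
    have hmeas : Measurable fun x => (gaussianPDFReal 0 v x).toNNReal :=
      (measurable_gaussianPDFReal 0 v).real_toNNReal
    rw [gaussianPDF_eq_coe_toNNReal', integrable_withDensity_iff_integrable_smul hmeas]
    have : (fun x => ((gaussianPDFReal 0 v x).toNNReal : ℝ≥0) • Real.exp (t * x))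
        = fun x => Real.exp ((v : ℝ) * t ^ 2 / 2) * gaussianPDFReal ((v : ℝ) * t) v x := by
      funext x
      rw [NNReal.smul_def, smul_eq_mul, Real.coe_toNNReal _ (gaussianPDFReal_nonneg 0 v x),
        mul_comm]
      exact exp_mul_gaussianPDFReal' v hv t x
    rw [this]
    exact (integrable_gaussianPDFReal _ _).const_mul _

lemma pi_gauss_integrable' (n : ℕ) (σ : ℝ≥0) (a : Fin n → ℝ) (t : ℝ) :
    Integrable (fun ξ : Fin n → ℝ => Real.exp (t * ∑ i, a i * ξ i))
      (Measure.pi fun _ : Fin n => gaussianReal 0 (σ ^ 2)) := by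
  letI : MeasureSpace ℝ := ⟨gaussianReal 0 (σ ^ 2)⟩
  haveI : SigmaFinite (volume : Measure ℝ) := by
    show SigmaFinite (gaussianReal 0 (σ ^ 2)); infer_instance
  have hvol : (volume : Measure (Fin n → ℝ)) = Measure.pi fun _ : Fin n => gaussianReal 0 (σ ^ 2) :=
    volume_pi
  have hexp : ∀ ξ : Fin n → ℝ, Real.exp (t * ∑ i, a i * ξ i) = ∏ i, Real.exp ((t * a i) * ξ i) := by
    intro ξ
    rw [← Real.exp_sum, Finset.mul_sum]
    congr 1
    exact Finset.sum_congr rfl fun i _ => by ring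
  have := Integrable.fintype_prod (𝕜 := ℝ)
    (f := fun (i : Fin n) (x : ℝ) => Real.exp ((t * a i) * x))
    (fun i => integrable_exp_gaussianReal' (σ ^ 2) (t * a i))
  exact this.congr (Filter.Eventually.of_forall fun ξ => (hexp ξ).symm)

lemma pi_gauss_mgf' (n : ℕ) (σ : ℝ≥0) (a : Fin n → ℝ) (t : ℝ) :
    mgf (fun ξ : Fin n → ℝ => ∑ i, a i * ξ i)
        (Measure.pi fun _ : Fin n => gaussianReal 0 (σ ^ 2)) t
      = Real.exp ((σ : ℝ) ^ 2 * (∑ i, (a i) ^ 2) * t ^ 2 / 2) := by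
  letI : MeasureSpace ℝ := ⟨gaussianReal 0 (σ ^ 2)⟩
  haveI : SigmaFinite (volume : Measure ℝ) := by
    show SigmaFinite (gaussianReal 0 (σ ^ 2)); infer_instance
  have hvol : (volume : Measure (Fin n → ℝ)) = Measure.pi fun _ : Fin n => gaussianReal 0 (σ ^ 2) :=
    volume_pi
  have hexp : ∀ ξ : Fin n → ℝ, Real.exp (t * ∑ i, a i * ξ i) = ∏ i, Real.exp ((t * a i) * ξ i) := by
    intro ξ
    rw [← Real.exp_sum, Finset.mul_sum]
    congr 1
    exact Finset.sum_congr rfl fun i _ => by ring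
  rw [mgf]
  calc ∫ ξ, Real.exp (t * ∑ i, a i * ξ i) ∂(Measure.pi fun _ : Fin n => gaussianReal 0 (σ ^ 2))
      = ∫ ξ : Fin n → ℝ, ∏ i, Real.exp ((t * a i) * ξ i) := by
        rw [hvol]; exact integral_congr_ae (Filter.Eventually.of_forall hexp)
    _ = ∏ i, ∫ x, Real.exp ((t * a i) * x) ∂(gaussianReal 0 (σ ^ 2)) := by
        rw [hvol]; exact integral_fintype_prod_eq_prod (f := fun (i : Fin n) (x : ℝ) =>
          Real.exp ((t * a i) * x))
    _ = ∏ i, Real.exp ((σ : ℝ) ^ 2 * (t * a i) ^ 2 / 2) := by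
        simp_rw [integral_exp_gaussianReal']; norm_cast
    _ = Real.exp ((σ : ℝ) ^ 2 * (∑ i, (a i) ^ 2) * t ^ 2 / 2) := by
        rw [← Real.exp_sum]
        congr 1
        have : ∀ i : Fin n, (σ : ℝ) ^ 2 * (t * a i) ^ 2 / 2
            = ((σ : ℝ) ^ 2 * t ^ 2 / 2) * (a i) ^ 2 := fun i => by ring
        simp_rw [this]
        rw [← Finset.mul_sum]; ring

lemma pi_gauss_chernoff' (n : ℕ) (σ : ℝ≥0) (a : Fin n → ℝ) (ε t : ℝ) (ht : 0 ≤ t) :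
    (Measure.pi fun _ : Fin n => gaussianReal 0 (σ ^ 2)) {ξ | ε ≤ ∑ i, a i * ξ i}
      ≤ ENNReal.ofReal
          (Real.exp (-t * ε) * Real.exp ((σ : ℝ) ^ 2 * (∑ i, (a i) ^ 2) * t ^ 2 / 2)) := by
  have hch := measure_ge_le_exp_mul_mgf
    (μ := Measure.pi fun _ : Fin n => gaussianReal 0 (σ ^ 2))
    (X := fun ξ => ∑ i, a i * ξ i) ε ht (pi_gauss_integrable' n σ a t)
  rw [pi_gauss_mgf' n σ a t] at hch
  have hne : (Measure.pi fun _ : Fin n => gaussianReal 0 (σ ^ 2)) {ξ | ε ≤ ∑ i, a i * ξ i} ≠ ⊤ :=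
    measure_ne_top _ _
  rw [ENNReal.le_ofReal_iff_toReal_le hne (by positivity)]
  exact hch

lemma pi_gauss_abs_tail' (n : ℕ) (σ : ℝ≥0) (a : Fin n → ℝ) (ε : ℝ) (hε : 0 ≤ ε)
    (hs : 0 < (σ : ℝ) ^ 2 * ∑ i, (a i) ^ 2) :
    (Measure.pi fun _ : Fin n => gaussianReal 0 (σ ^ 2)) {ξ | ε < |∑ i, a i * ξ i|}
      ≤ ENNReal.ofReal (2 * Real.exp (-(ε ^ 2) / (2 * ((σ : ℝ) ^ 2 * ∑ i, (a i) ^ 2)))) := by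
  set s := ∑ i, (a i) ^ 2 with hsdef
  set t := ε / ((σ : ℝ) ^ 2 * s) with htdef
  have ht : 0 ≤ t := div_nonneg hε hs.le
  have hval : Real.exp (-t * ε) * Real.exp ((σ : ℝ) ^ 2 * s * t ^ 2 / 2)
      = Real.exp (-(ε ^ 2) / (2 * ((σ : ℝ) ^ 2 * s))) := by
    rw [← Real.exp_add]
    congr 1
    rw [htdef]
    field_simp
    ring
  have hsub : {ξ : Fin n → ℝ | ε < |∑ i, a i * ξ i|}
      ⊆ {ξ : Fin n → ℝ | ε ≤ ∑ i, a i * ξ i} ∪ {ξ : Fin n → ℝ | ε ≤ ∑ i, (-a) i * ξ i} := by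
    intro ξ hξ
    simp only [Set.mem_setOf_eq, Set.mem_union] at *
    have hneg : (∑ i, (-a) i * ξ i) = -∑ i, a i * ξ i := by
      rw [← Finset.sum_neg_distrib]
      exact Finset.sum_congr rfl fun i _ => by simp [neg_mul]
    rcases lt_abs.mp hξ with h | h
    · exact Or.inl h.le
    · exact Or.inr (hneg ▸ h.le)
  have h1 := pi_gauss_chernoff' n σ a ε t ht
  have h2 := pi_gauss_chernoff' n σ (-a) ε t ht
  have hs2 : (∑ i, ((-a) i) ^ 2) = s := by
    rw [hsdef]
    exact Finset.sum_congr rfl fun i _ => by simp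
  rw [hs2] at h2
  calc (Measure.pi fun _ : Fin n => gaussianReal 0 (σ ^ 2)) {ξ | ε < |∑ i, a i * ξ i|}
      ≤ (Measure.pi fun _ : Fin n => gaussianReal 0 (σ ^ 2))
          ({ξ : Fin n → ℝ | ε ≤ ∑ i, a i * ξ i} ∪ {ξ : Fin n → ℝ | ε ≤ ∑ i, (-a) i * ξ i}) :=
        measure_mono hsub
    _ ≤ (Measure.pi fun _ : Fin n => gaussianReal 0 (σ ^ 2)) {ξ : Fin n → ℝ | ε ≤ ∑ i, a i * ξ i}
        + (Measure.pi fun _ : Fin n => gaussianReal 0 (σ ^ 2))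
            {ξ : Fin n → ℝ | ε ≤ ∑ i, (-a) i * ξ i} := measure_union_le _ _
    _ ≤ ENNReal.ofReal (Real.exp (-t * ε) * Real.exp ((σ : ℝ) ^ 2 * s * t ^ 2 / 2))
        + ENNReal.ofReal (Real.exp (-t * ε) * Real.exp ((σ : ℝ) ^ 2 * s * t ^ 2 / 2)) :=
        add_le_add h1 h2
    _ = ENNReal.ofReal (2 * Real.exp (-(ε ^ 2) / (2 * ((σ : ℝ) ^ 2 * s)))) := by
        rw [hval, ← ENNReal.ofReal_add (by positivity) (by positivity)]
        congr 1
        ring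

lemma good_event_prob' (n m : ℕ) (σ : ℝ≥0) (A : Matrix (Fin n) (Fin m) ℝ) (μ : ℝ) (hμ : 0 ≤ μ)
    (hcol : ∀ j, ∑ i, (A i j) ^ 2 ≤ 1 + μ) (hm : 2 ≤ m) :
    ENNReal.ofReal (1 - 1 / (m : ℝ)) ≤
      (Measure.pi fun _ : Fin n => gaussianReal 0 (σ ^ 2))
        {ξ : Fin n → ℝ | ∀ j, |∑ i, A i j * ξ i|
          ≤ 3 * (σ : ℝ) * Real.sqrt ((1 + μ) * Real.log m)} := by
  set P := Measure.pi fun _ : Fin n => gaussianReal 0 (σ ^ 2)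
  set ε := 3 * (σ : ℝ) * Real.sqrt ((1 + μ) * Real.log m) with hε
  have hm1 : (1 : ℝ) ≤ m := by exact_mod_cast Nat.one_le_of_lt hm
  have hm0 : (0 : ℝ) < m := by linarith
  have hL : 0 ≤ Real.log m := Real.log_nonneg hm1
  have hεnn : 0 ≤ ε := by positivity
  set G := {ξ : Fin n → ℝ | ∀ j, |∑ i, A i j * ξ i| ≤ ε} with hG
  rcases eq_or_ne σ 0 with rfl | hσ
  · have hsub : (Set.univ.pi fun _ : Fin n => ({0} : Set ℝ)) ⊆ G := by
      intro ξ hξ j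
      have hz : ∀ i, ξ i = 0 := fun i => hξ i (Set.mem_univ i)
      simp only [hG, Set.mem_setOf_eq, hz, mul_zero, Finset.sum_const_zero, abs_zero]
      exact hεnn
    have h1 : P (Set.univ.pi fun _ : Fin n => ({0} : Set ℝ)) = 1 := by
      rw [Measure.pi_pi]
      have : ∀ i : Fin n, gaussianReal 0 ((0 : ℝ≥0) ^ 2) ({0} : Set ℝ) = 1 := by
        intro i
        rw [show ((0 : ℝ≥0) ^ 2) = 0 by norm_num, gaussianReal_zero_var]
        simp
      simp [this]
    calc ENNReal.ofReal (1 - 1 / (m : ℝ)) ≤ 1 := ENNReal.ofReal_le_one.mpr (by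
          rw [sub_le_self_iff]; positivity)
      _ = P (Set.univ.pi fun _ : Fin n => ({0} : Set ℝ)) := h1.symm
      _ ≤ P G := measure_mono hsub
  · have hσ' : (0 : ℝ) < (σ : ℝ) := by positivity
    have hLpos : 0 < Real.log m := Real.log_pos (by exact_mod_cast hm)
    have hεpos : 0 < ε := by
      rw [hε]
      have : 0 < (1 + μ) * Real.log m := by positivity
      positivity
    have hbad : ∀ j : Fin m, P {ξ : Fin n → ℝ | ε < |∑ i, A i j * ξ i|}
        ≤ ENNReal.ofReal (2 * Real.exp (-3 * Real.log m)) := by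
      intro j
      set s := ∑ i, (A i j) ^ 2 with hs
      have hsnn : 0 ≤ s := Finset.sum_nonneg fun i _ => sq_nonneg _
      rcases eq_or_lt_of_le hsnn with hs0 | hs0
      · have hzero : ∀ i, A i j = 0 := by
          intro i
          have := Finset.sum_eq_zero_iff_of_nonneg (fun i _ => sq_nonneg (A i j)) |>.mp hs0.symm
          exact pow_eq_zero_iff (n := 2) (by norm_num) |>.mp (this i (Finset.mem_univ i))
        have : {ξ : Fin n → ℝ | ε < |∑ i, A i j * ξ i|} = ∅ := by
          ext ξ
          simp [hzero, hεpos.not_gt]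
        rw [this]
        simp
      · have hvar : 0 < (σ : ℝ) ^ 2 * s := by positivity
        refine (pi_gauss_abs_tail' n σ (fun i => A i j) ε hεnn (by rwa [← hs])).trans ?_
        apply ENNReal.ofReal_le_ofReal
        have hexp : -(ε ^ 2) / (2 * ((σ : ℝ) ^ 2 * s)) ≤ -3 * Real.log m := by
          rw [div_le_iff₀ (by positivity)]
          have hε2 : ε ^ 2 = 9 * (σ : ℝ) ^ 2 * ((1 + μ) * Real.log m) := by
            rw [hε, mul_pow, mul_pow, Real.sq_sqrt (by positivity)]
            ring
          have hsle : s ≤ 1 + μ := hcol j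
          have key : (σ : ℝ) ^ 2 * Real.log m * s ≤ (σ : ℝ) ^ 2 * Real.log m * (1 + μ) :=
            mul_le_mul_of_nonneg_left hsle (by positivity)
          have hnn : 0 ≤ (σ : ℝ) ^ 2 * Real.log m * (1 + μ) := by positivity
          nlinarith
        rw [← hs]
        have := Real.exp_le_exp.mpr hexp
        nlinarith [Real.exp_pos (-(ε ^ 2) / (2 * ((σ : ℝ) ^ 2 * s)))]
    have hcompl : Gᶜ ⊆ ⋃ j : Fin m, {ξ : Fin n → ℝ | ε < |∑ i, A i j * ξ i|} := by
      intro ξ hξ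
      simp only [hG, Set.mem_compl_iff, Set.mem_setOf_eq, not_forall] at hξ
      obtain ⟨j, hj⟩ := hξ
      exact Set.mem_iUnion.mpr ⟨j, not_le.mp hj⟩
    have hunion : P Gᶜ ≤ ENNReal.ofReal (1 / (m : ℝ)) := by
      calc P Gᶜ ≤ ∑' j : Fin m, P {ξ : Fin n → ℝ | ε < |∑ i, A i j * ξ i|} :=
            (measure_mono hcompl).trans (measure_iUnion_le _)
        _ ≤ ∑' j : Fin m, ENNReal.ofReal (2 * Real.exp (-3 * Real.log m)) := by
            rw [tsum_fintype, tsum_fintype]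
            exact Finset.sum_le_sum fun j _ => hbad j
        _ = (m : ℝ≥0∞) * ENNReal.ofReal (2 * Real.exp (-3 * Real.log m)) := by
            rw [tsum_fintype, Finset.sum_const, Finset.card_univ, Fintype.card_fin,
              nsmul_eq_mul]
        _ = ENNReal.ofReal ((m : ℝ) * (2 * Real.exp (-3 * Real.log m))) := by
            rw [← ENNReal.ofReal_natCast m, ← ENNReal.ofReal_mul (by positivity)]
        _ ≤ ENNReal.ofReal (1 / (m : ℝ)) := by
            apply ENNReal.ofReal_le_ofReal
            have h3 : Real.exp (-3 * Real.log m) = ((m : ℝ) ^ 3)⁻¹ := by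
              rw [show (-3 : ℝ) * Real.log m = -(Real.log m + Real.log m + Real.log m) by ring,
                Real.exp_neg, Real.exp_add, Real.exp_add, Real.exp_log hm0]
              ring_nf
            rw [h3]
            have hm2 : (2 : ℝ) ≤ m := by exact_mod_cast hm
            have heq : (m : ℝ) * (2 * ((m : ℝ) ^ 3)⁻¹) = 2 / (m : ℝ) ^ 2 := by
              field_simp
            rw [heq, div_le_div_iff₀ (by positivity) hm0]
            nlinarith
    haveI : IsProbabilityMeasure P := by
      show IsProbabilityMeasure (Measure.pi fun _ : Fin n => gaussianReal 0 (σ ^ 2))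
      infer_instance
    have huniv : (1 : ℝ≥0∞) ≤ P G + P Gᶜ := by
      have h1 : P (G ∪ Gᶜ) ≤ P G + P Gᶜ := measure_union_le _ _
      rwa [Set.union_compl_self, measure_univ] at h1
    calc ENNReal.ofReal (1 - 1 / (m : ℝ))
        = 1 - ENNReal.ofReal (1 / (m : ℝ)) := by
          rw [ENNReal.ofReal_sub _ (by positivity), ENNReal.ofReal_one]
      _ ≤ P G := by
          rw [tsub_le_iff_right]
          calc (1 : ℝ≥0∞) ≤ P G + P Gᶜ := huniv
            _ ≤ P G + ENNReal.ofReal (1 / (m : ℝ)) := add_le_add_right hunion _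

lemma soft_close' (τ v : ℝ) (hτ : 0 ≤ τ) : |Real.sign v * max 0 (|v| - τ) - v| ≤ τ := by
  rcases lt_trichotomy v 0 with hv | rfl | hv
  · rw [Real.sign_of_neg hv, abs_of_neg hv]
    rcases le_or_gt (-v) τ with h | h
    · rw [max_eq_left (by linarith), abs_le]
      constructor <;> nlinarith
    · rw [max_eq_right (by linarith), abs_le]
      constructor <;> nlinarith
  · simp [Real.sign_zero, hτ]
  · rw [Real.sign_of_pos hv, abs_of_pos hv]
    rcases le_or_gt v τ with h | h
    · rw [max_eq_left (by linarith), abs_le]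
      constructor <;> nlinarith
    · rw [max_eq_right (by linarith), abs_le]
      constructor <;> nlinarith

lemma soft_zero' (τ v : ℝ) (h : |v| ≤ τ) : Real.sign v * max 0 (|v| - τ) = 0 := by
  rw [max_eq_left (by linarith), mul_zero]

lemma det_core' (m k : ℕ) (hm : 0 < m) (τ : ℝ) (hτ : 0 ≤ τ)
    (z v w : Fin m → ℝ)
    (hdev : ∀ j, |v j - z j| ≤ τ)
    (hcard : (Finset.univ.filter fun j => z j ≠ 0).card ≤ k)
    (hw : (⨆ i, |w i|) = 1) :
    ((∑ i, w i * (Real.sign (v i) * max 0 (|v i| - τ))) - ∑ i, w i * z i) ^ 2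
      ≤ (k : ℝ) ^ 2 * (⨆ i : Fin m, |Real.sign (v i) * max 0 (|v i| - τ) - z i|) ^ 2
  ∧ (⨆ i : Fin m, |Real.sign (v i) * max 0 (|v i| - τ) - z i|) ≤ 2 * τ
  ∧ 0 ≤ (⨆ i : Fin m, |Real.sign (v i) * max 0 (|v i| - τ) - z i|) := by
  haveI : Nonempty (Fin m) := Fin.pos_iff_nonempty.mp hm
  set f : Fin m → ℝ := fun i => Real.sign (v i) * max 0 (|v i| - τ) with hf
  set T : ℝ := ⨆ i : Fin m, |f i - z i| with hT
  have hclose : ∀ j, |f j - z j| ≤ 2 * τ := by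
    intro j
    calc |f j - z j| ≤ |f j - v j| + |v j - z j| := abs_sub_le _ _ _
      _ ≤ τ + τ := add_le_add (soft_close' τ (v j) hτ) (hdev j)
      _ = 2 * τ := by ring
  have hsupp : ∀ j, z j = 0 → f j = 0 := by
    intro j hz
    apply soft_zero'
    have := hdev j
    rwa [hz, sub_zero] at this
  have hbdd : BddAbove (Set.range fun i : Fin m => |f i - z i|) :=
    (Set.finite_range _).bddAbove
  have hTle : ∀ j, |f j - z j| ≤ T := fun j => le_ciSup hbdd j
  have hT2 : T ≤ 2 * τ := ciSup_le hclose
  have hT0 : 0 ≤ T := le_trans (abs_nonneg _) (hTle (Classical.arbitrary _))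
  have hwbdd : BddAbove (Set.range fun i : Fin m => |w i|) :=
    (Set.finite_range _).bddAbove
  have hwle : ∀ j, |w j| ≤ 1 := by
    intro j
    rw [← hw]
    exact le_ciSup hwbdd j
  have hsum : |(∑ i, w i * f i) - ∑ i, w i * z i| ≤ (k : ℝ) * T := by
    rw [← Finset.sum_sub_distrib]
    have h1 : ∀ i, w i * f i - w i * z i = w i * (f i - z i) := fun i => by ring
    simp_rw [h1]
    calc |∑ i, w i * (f i - z i)| ≤ ∑ i, |w i * (f i - z i)| :=
          Finset.abs_sum_le_sum_abs _ _
      _ = ∑ i ∈ Finset.univ.filter fun j => z j ≠ 0, |w i * (f i - z i)| := by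
          symm
          apply Finset.sum_subset (Finset.filter_subset _ _)
          intro x _ hx
          simp only [Finset.mem_filter, Finset.mem_univ, true_and, not_not] at hx
          rw [hsupp x hx, hx, sub_zero, mul_zero, abs_zero]
      _ ≤ (Finset.univ.filter fun j => z j ≠ 0).card • T := by
          apply Finset.sum_le_card_nsmul
          intro j _
          rw [abs_mul]
          calc |w j| * |f j - z j| ≤ 1 * T :=
                mul_le_mul (hwle j) (hTle j) (abs_nonneg _) zero_le_one
            _ = T := one_mul T
      _ = ((Finset.univ.filter fun j => z j ≠ 0).card : ℝ) * T := by
          rw [nsmul_eq_mul]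
      _ ≤ (k : ℝ) * T := by
          apply mul_le_mul_of_nonneg_right _ hT0
          exact_mod_cast hcard
  refine ⟨?_, hT2, hT0⟩
  have h2 : |(∑ i, w i * f i) - ∑ i, w i * z i| ^ 2 ≤ ((k : ℝ) * T) ^ 2 :=
    pow_le_pow_left₀ (abs_nonneg _) hsum 2
  rw [sq_abs] at h2
  calc ((∑ i, w i * f i) - ∑ i, w i * z i) ^ 2 ≤ ((k : ℝ) * T) ^ 2 := h2
    _ = (k : ℝ) ^ 2 * T ^ 2 := mul_pow _ _ _

end Aux

/-- ReLU network prediction error: in the setting of the soft-thresholding lemma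
(`A` being `μ`-incoherent `n × m` with column norms² at most `1+μ`, `z` a `k`-sparse
vector with `‖z‖₁ ≤ M`, `x = Az + ξ`, `ξ ~ N(0, σ²I)`, `‖w‖_∞ = 1`, `Y = ⟨w, z⟩`,
`τ = C(σ√((1+μ) log m) + μM)` and `ẑ = ρ_τ^{⊗m}(Aᵀx)`, `Ŷ = ⟨w, ẑ⟩`), with
probability at least `1 − 1/m` one has
`(Ŷ − Y)² ≤ k² ‖ẑ − z‖_∞²` and `(Ŷ − Y)² ≤ C' k² ((1+μ) σ² log m + μ² M²)`. -/
theorem relu_network_prediction_error :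
    ∃ C C' : ℝ, 0 < C ∧ 0 < C' ∧
      ∀ (n m k : ℕ) (A : Matrix (Fin n) (Fin m) ℝ) (μ M : ℝ) (σ : ℝ≥0),
        0 < m →
        0 ≤ μ →
        (∀ i j, |(Aᵀ * A - 1 : Matrix (Fin m) (Fin m) ℝ) i j| ≤ μ) →
        (∀ j, ∑ i, (A i j) ^ 2 ≤ 1 + μ) →
        ∀ z : Fin m → ℝ, (∑ j, |z j|) ≤ M →
          (Finset.univ.filter fun j => z j ≠ 0).card ≤ k →
          ∀ w : Fin m → ℝ, (⨆ i, |w i|) = 1 →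
          ENNReal.ofReal (1 - 1 / (m : ℝ)) ≤
            (Measure.pi fun _ : Fin n => gaussianReal 0 (σ ^ 2))
              {ξ : Fin n → ℝ |
                ((∑ i, w i *
                    (Real.sign (Aᵀ.mulVec (A.mulVec z + ξ) i) *
                      max 0 (|Aᵀ.mulVec (A.mulVec z + ξ) i| -
                        C * ((σ : ℝ) * Real.sqrt ((1 + μ) * Real.log m) + μ * M)))) -
                  ∑ i, w i * z i) ^ 2 ≤
                  (k : ℝ) ^ 2 *
                    (⨆ i : Fin m,
                      |Real.sign (Aᵀ.mulVec (A.mulVec z + ξ) i) *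
                        max 0 (|Aᵀ.mulVec (A.mulVec z + ξ) i| -
                          C * ((σ : ℝ) * Real.sqrt ((1 + μ) * Real.log m) + μ * M)) -
                        z i|) ^ 2 ∧
                ((∑ i, w i *
                    (Real.sign (Aᵀ.mulVec (A.mulVec z + ξ) i) *
                      max 0 (|Aᵀ.mulVec (A.mulVec z + ξ) i| -
                        C * ((σ : ℝ) * Real.sqrt ((1 + μ) * Real.log m) + μ * M)))) -
                  ∑ i, w i * z i) ^ 2 ≤
                  C' * (k : ℝ) ^ 2 *
                    ((1 + μ) * (σ : ℝ) ^ 2 * Real.log m + μ ^ 2 * M ^ 2)} := by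
  refine ⟨3, 72, by norm_num, by norm_num, ?_⟩
  intro n m k A μ M σ hm hμ hinc hcol z hz1 hcard w hw
  rcases Nat.lt_or_ge m 2 with h2 | h2
  · have hm1 : m = 1 := by omega
    subst hm1
    have : (1 : ℝ) - 1 / ((1 : ℕ) : ℝ) = 0 := by norm_num
    rw [this, ENNReal.ofReal_zero]
    exact zero_le
  · refine le_trans (good_event_prob' n m σ A μ hμ hcol h2) (measure_mono ?_)
    intro ξ hξ
    simp only [Set.mem_setOf_eq] at hξ ⊢
    set τ : ℝ := 3 * ((σ : ℝ) * Real.sqrt ((1 + μ) * Real.log m) + μ * M) with hτdef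
    have hM0 : 0 ≤ M := le_trans (Finset.sum_nonneg fun j _ => abs_nonneg _) hz1
    have hm1 : (1 : ℝ) ≤ m := by exact_mod_cast Nat.one_le_of_lt h2
    have hm0 : (0 : ℝ) < m := by linarith
    have hL : 0 ≤ Real.log m := Real.log_nonneg hm1
    have hμM : 0 ≤ μ * M := mul_nonneg hμ hM0
    have hτ0 : 0 ≤ τ := by
      rw [hτdef]
      have h1 : 0 ≤ (σ : ℝ) * Real.sqrt ((1 + μ) * Real.log m) := by positivity
      linarith
    have hdev : ∀ j, |Aᵀ.mulVec (A.mulVec z + ξ) j - z j| ≤ τ := by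
      intro j
      have hvj : Aᵀ.mulVec (A.mulVec z + ξ) j - z j
          = ((Aᵀ * A - 1).mulVec z) j + ∑ i, A i j * ξ i := by
        rw [Matrix.mulVec_add, Matrix.mulVec_mulVec, Matrix.sub_mulVec, Matrix.one_mulVec]
        simp only [Pi.add_apply, Pi.sub_apply]
        have : Aᵀ.mulVec ξ j = ∑ i, A i j * ξ i := by
          simp [Matrix.mulVec, dotProduct, Matrix.transpose_apply]
        rw [this]
        ring
      rw [hvj]
      have hb1 : |((Aᵀ * A - 1).mulVec z) j| ≤ μ * M := by
        rw [Matrix.mulVec, dotProduct]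
        calc |∑ l, (Aᵀ * A - 1 : Matrix (Fin m) (Fin m) ℝ) j l * z l|
              ≤ ∑ l, |(Aᵀ * A - 1 : Matrix (Fin m) (Fin m) ℝ) j l * z l| :=
              Finset.abs_sum_le_sum_abs _ _
          _ ≤ ∑ l, μ * |z l| := by
              apply Finset.sum_le_sum
              intro l _
              rw [abs_mul]
              exact mul_le_mul_of_nonneg_right (hinc j l) (abs_nonneg _)
          _ = μ * ∑ l, |z l| := by rw [Finset.mul_sum]
          _ ≤ μ * M := mul_le_mul_of_nonneg_left hz1 hμ
      have hb2 : |∑ i, A i j * ξ i| ≤ 3 * (σ : ℝ) * Real.sqrt ((1 + μ) * Real.log m) := hξ j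
      calc |((Aᵀ * A - 1).mulVec z) j + ∑ i, A i j * ξ i|
          ≤ |((Aᵀ * A - 1).mulVec z) j| + |∑ i, A i j * ξ i| := abs_add_le _ _
        _ ≤ μ * M + 3 * (σ : ℝ) * Real.sqrt ((1 + μ) * Real.log m) := add_le_add hb1 hb2
        _ ≤ τ := by rw [hτdef]; linarith
    obtain ⟨h1, hT2, hT0⟩ :=
      det_core' m k hm τ hτ0 z (Aᵀ.mulVec (A.mulVec z + ξ)) w hdev hcard hw
    refine ⟨h1, ?_⟩
    set T : ℝ := ⨆ i : Fin m,
      |Real.sign (Aᵀ.mulVec (A.mulVec z + ξ) i) *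
        max 0 (|Aᵀ.mulVec (A.mulVec z + ξ) i| - τ) - z i| with hTdef
    have hx2 : (Real.sqrt ((1 + μ) * Real.log m)) ^ 2 = (1 + μ) * Real.log m :=
      Real.sq_sqrt (by positivity)
    have hT2' : T ^ 2 ≤ (2 * τ) ^ 2 := pow_le_pow_left₀ hT0 hT2 2
    have hE : (2 * τ) ^ 2 ≤ 72 * ((1 + μ) * (σ : ℝ) ^ 2 * Real.log m + μ ^ 2 * M ^ 2) := by
      rw [hτdef]
      nlinarith [sq_nonneg ((σ : ℝ) * Real.sqrt ((1 + μ) * Real.log m) - μ * M), hx2,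
        sq_nonneg ((σ : ℝ) * Real.sqrt ((1 + μ) * Real.log m)), sq_nonneg (μ * M)]
    calc ((∑ i, w i *
            (Real.sign (Aᵀ.mulVec (A.mulVec z + ξ) i) *
              max 0 (|Aᵀ.mulVec (A.mulVec z + ξ) i| - τ))) - ∑ i, w i * z i) ^ 2
        ≤ (k : ℝ) ^ 2 * T ^ 2 := h1
      _ ≤ (k : ℝ) ^ 2 * (2 * τ) ^ 2 := mul_le_mul_of_nonneg_left hT2' (sq_nonneg _)
      _ ≤ (k : ℝ) ^ 2 * (72 * ((1 + μ) * (σ : ℝ) ^ 2 * Real.log m + μ ^ 2 * M ^ 2)) :=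
          mul_le_mul_of_nonneg_left hE (sq_nonneg _)
      _ = 72 * (k : ℝ) ^ 2 * ((1 + μ) * (σ : ℝ) ^ 2 * Real.log m + μ ^ 2 * M ^ 2) := by
          ring
end
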